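/- arXiv:1108.4647 — 10 statements merged into one kernel-verified Lean document; each statement's English description precedes it below -/
import Mathlib

section
/- Let T be a tree, let P be a bare path of maximum length in T, and let L be the set of leaves of T. Then 2(|V(P)|+1)(|L|−1) ≥ |V(T)|. -/
open Finset

section BareAux

variable {V : Type*} [Fintype V] [DecidableEq V]

private def walkUpAux (T : SimpleGraph V) (p : V → V) (hadj : ∀ v, T.Adj v (p v)) :
    (k : ℕ) → (v : V) → T.Walk v (p^[k] v)
  | 0, _ => SimpleGraph.Walk.nil
  | (k+1), v => SimpleGraph.Walk.cons (hadj v) (walkUpAux T p hadj k (p v))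

private lemma walkUpAux_support (T : SimpleGraph V) (p : V → V) (hadj : ∀ v, T.Adj v (p v))
    (k : ℕ) (v : V) :
    (walkUpAux T p hadj k v).support = (List.range (k+1)).map (fun i => p^[i] v) := by
  induction k generalizing v with
  | zero => simp [walkUpAux]
  | succ k ih =>
    show List.cons v (walkUpAux T p hadj k (p v)).support = _
    rw [ih]
    rw [List.range_succ_eq_map]
    simp [List.map_map, Function.comp_def, Function.iterate_succ_apply]

end BareAux

/-- A bare path in a tree `T` is a path all of whose vertices have degree exactly 2 in `T`. -/
def IsBarePath {V : Type*} [Fintype V] [DecidableEq V] (T : SimpleGraph V)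
    [DecidableRel T.Adj] {u v : V} (p : T.Walk u v) : Prop :=
  p.IsPath ∧ ∀ w ∈ p.support, T.degree w = 2

/-- If every bare path of a tree `T` has at most `b` vertices
(in particular for `b` the number of vertices of a longest bare path, or `b = 0` if
there is no bare path) and `L` is the set of leaves of `T`, then
`2(b+1)(|L|-1) ≥ |V(T)|`. -/
theorem stmt_1 {V : Type*} [Fintype V] [DecidableEq V] (T : SimpleGraph V)
    [DecidableRel T.Adj] (hT : T.IsTree) (hn : 2 ≤ Fintype.card V) (b : ℕ)
    (hmax : ∀ (u v : V) (p : T.Walk u v), IsBarePath T p → p.support.length ≤ b) :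
    Fintype.card V ≤ 2 * (b + 1) * ((univ.filter fun v => T.degree v = 1).card - 1) := by
  classical
  have hconn := hT.isConnected
  have hdegpos : ∀ v : V, 0 < T.degree v := by
    intro v
    obtain ⟨w, hw⟩ := Fintype.exists_ne_of_one_lt_card (by omega) v
    obtain ⟨q⟩ := hconn.preconnected v w
    cases q with
    | nil => exact absurd rfl hw
    | cons h q' =>
      rw [← SimpleGraph.card_neighborFinset_eq_degree]
      exact Finset.card_pos.mpr ⟨_, (SimpleGraph.mem_neighborFinset _ _ _).mpr h⟩
  -- partition of the vertex set by degree
  set L := univ.filter fun v => T.degree v = 1 with hL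
  set D := univ.filter fun v => T.degree v = 2 with hDdef
  set B := univ.filter fun v => ¬ T.degree v = 1 ∧ ¬ T.degree v = 2 with hBdef
  have e1 : (univ.filter fun a => ¬T.degree a = 1 ∧ T.degree a = 2) = D := by
    rw [hDdef]; ext v; simp only [Finset.mem_filter, Finset.mem_univ, true_and]; omega
  have hcard : L.card + D.card + B.card = Fintype.card V := by
    have h1 := Finset.card_filter_add_card_filter_not (s := (univ : Finset V))
      (p := fun v => T.degree v = 1)
    have h2 := Finset.card_filter_add_card_filter_not
      (s := univ.filter fun v => ¬ T.degree v = 1) (p := fun v => T.degree v = 2)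
    rw [Finset.filter_filter, Finset.filter_filter, e1, ← hBdef] at h2
    rw [← hL, Finset.card_univ, ← h2] at h1
    omega
  have hsumsplit : (∑ v ∈ L, T.degree v) + ((∑ v ∈ D, T.degree v) + (∑ v ∈ B, T.degree v))
      = ∑ v : V, T.degree v := by
    have h1 := Finset.sum_filter_add_sum_filter_not (univ : Finset V)
      (fun v => T.degree v = 1) (fun v => T.degree v)
    have h2 := Finset.sum_filter_add_sum_filter_not (univ.filter fun v => ¬ T.degree v = 1)
      (fun v => T.degree v = 2) (fun v => T.degree v)
    rw [Finset.filter_filter, Finset.filter_filter, e1, ← hBdef] at h2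
    rw [← hL, ← h2] at h1
    exact h1
  have hsumL : ∑ v ∈ L, T.degree v = L.card := by
    rw [Finset.sum_congr rfl (fun v hv => (Finset.mem_filter.mp hv).2)]
    simp [hL]
  have hsumD : ∑ v ∈ D, T.degree v = 2 * D.card := by
    rw [Finset.sum_congr rfl (fun v hv => (Finset.mem_filter.mp hv).2)]
    simp [mul_comm, hDdef]
  set S := ∑ v ∈ B, T.degree v with hSdef
  have hS3 : 3 * B.card ≤ S := by
    rw [hSdef]
    calc 3 * B.card = ∑ _v ∈ B, 3 := by simp [mul_comm]
    _ ≤ ∑ v ∈ B, T.degree v := by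
        apply Finset.sum_le_sum
        intro v hv
        have h1 := (Finset.mem_filter.mp hv).2
        have := hdegpos v
        omega
  have hS2 : L.card + 2 * D.card + S + 2 = 2 * Fintype.card V := by
    have h1 := T.sum_degrees_eq_twice_card_edges
    have h2 := hT.card_edgeFinset
    omega
  have hLB : B.card + 2 ≤ L.card := by omega
  -- pick a root leaf r
  have hLne : L.Nonempty := Finset.card_pos.mp (by omega)
  obtain ⟨r, hrL⟩ := hLne
  have hdegr : T.degree r = 1 := (Finset.mem_filter.mp hrL).2
  -- parent function toward the root
  have hpar : ∀ v : V, ∃ u, T.Adj v u ∧ (v ≠ r → T.dist u r + 1 = T.dist v r) := by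
    intro v
    by_cases hv : v = r
    · have : (T.neighborFinset v).Nonempty := by
        rw [← Finset.card_pos, SimpleGraph.card_neighborFinset_eq_degree]; exact hdegpos v
      obtain ⟨u, hu⟩ := this
      exact ⟨u, (SimpleGraph.mem_neighborFinset _ _ _).mp hu, fun h => absurd hv h⟩
    · have hd0 : 0 < T.dist v r := hconn.pos_dist_of_ne hv
      obtain ⟨q, hq, hql⟩ := hconn.exists_path_of_dist v r
      cases q with
      | nil => exact absurd rfl hv
      | cons h q' =>
        rename_i u
        refine ⟨u, h, fun _ => ?_⟩
        have h1 : T.dist u r ≤ q'.length := SimpleGraph.dist_le q'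
        have h2 : T.dist v r ≤ T.dist u r + 1 := by
          obtain ⟨q2, hq2⟩ := hconn.exists_walk_length_eq_dist u r
          have h3 := SimpleGraph.dist_le (SimpleGraph.Walk.cons h q2)
          rw [SimpleGraph.Walk.length_cons, hq2] at h3
          omega
        rw [SimpleGraph.Walk.length_cons] at hql
        omega
  choose p hadj hdist using hpar
  have hchain : ∀ (v : V) (k : ℕ), (∀ i < k, p^[i] v ≠ r) →
      T.dist (p^[k] v) r + k = T.dist v r := by
    intro v k
    induction k with
    | zero => simp
    | succ k ih =>
      intro h
      have h1 := ih (fun i hi => h i (by omega))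
      have h2 := hdist (p^[k] v) (h k (by omega))
      rw [Function.iterate_succ_apply']
      omega
  have hterm : ∀ v : V, ∃ m, ¬ T.degree (p^[m] v) = 2 := by
    intro v
    by_contra hk
    push_neg at hk
    have hner : ∀ i, p^[i] v ≠ r := by
      intro i hi
      have := hk i
      rw [hi, hdegr] at this
      omega
    have := hchain v (T.dist v r + 1) (fun i _ => hner i)
    omega
  set k : V → ℕ := fun v => Nat.find (hterm v) with hkdef
  have hkspec : ∀ v, ¬ T.degree (p^[k v] v) = 2 := fun v => Nat.find_spec (hterm v)
  have hkmin : ∀ v, ∀ i < k v, T.degree (p^[i] v) = 2 := by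
    intro v i hi
    have := Nat.find_min (hterm v) hi
    tauto
  have hk1 : ∀ v, T.degree v = 2 → 1 ≤ k v := by
    intro v hv
    by_contra h
    have h0 : k v = 0 := by omega
    have := hkspec v
    rw [h0] at this
    exact this hv
  have hner : ∀ v, ∀ i < k v, p^[i] v ≠ r := by
    intro v i hi hir
    have := hkmin v i hi
    rw [hir, hdegr] at this
    omega
  have hdchain : ∀ v, ∀ i < k v, T.dist (p^[i] v) r + i = T.dist v r := by
    intro v i hi
    exact hchain v i (fun i' hi' => hner v i' (by omega))
  -- every maximal chain of degree-2 vertices is a bare path, hence k v ≤ b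
  have hkb : ∀ v, T.degree v = 2 → k v ≤ b := by
    intro v hv
    have h1 := hk1 v hv
    set j := k v - 1 with hj
    have hjk : j < k v := by omega
    have hsupp := walkUpAux_support T p hadj j v
    have hpath : (walkUpAux T p hadj j v).IsPath := by
      rw [SimpleGraph.Walk.isPath_def, hsupp]
      refine List.Nodup.map_on ?_ List.nodup_range
      intro i hi i' hi' hii
      rw [List.mem_range] at hi hi'
      have d1 := hdchain v i (by omega)
      have d2 := hdchain v i' (by omega)
      rw [hii] at d1
      omega
    have hbare : IsBarePath T (walkUpAux T p hadj j v) := by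
      refine ⟨hpath, ?_⟩
      intro w hw
      rw [hsupp, List.mem_map] at hw
      obtain ⟨i, hi, rfl⟩ := hw
      rw [List.mem_range] at hi
      exact hkmin v i (by omega)
    have := hmax _ _ _ hbare
    rw [hsupp, List.length_map, List.length_range] at this
    omega
  -- the tops of the chains
  set C := univ.filter fun c => T.degree c = 2 ∧ ¬ T.degree (p c) = 2 with hCdef
  -- injection from D into C × range b
  have hDC : D.card ≤ (C ×ˢ Finset.range b).card := by
    apply Finset.card_le_card_of_injOn (fun v => (p^[k v - 1] v, k v - 1))
    · intro v hv
      have hv2 : T.degree v = 2 := (Finset.mem_filter.mp hv).2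
      have h1 := hk1 v hv2
      rw [Finset.mem_coe, Finset.mem_product]
      constructor
      · rw [hCdef, Finset.mem_filter]
        refine ⟨Finset.mem_univ _, hkmin v _ (by omega), ?_⟩
        show ¬ T.degree (p (p^[k v - 1] v)) = 2
        have h3 : ¬ T.degree (p^[(k v - 1)+1] v) = 2 := by
          rw [show (k v - 1)+1 = k v from by omega]; exact hkspec v
        rw [Function.iterate_succ_apply'] at h3
        exact h3
      · rw [Finset.mem_range]
        have := hkb v hv2
        show k v - 1 < b
        omega
    · intro v hv v' hv' heq
      have hv2 : T.degree v = 2 := (Finset.mem_filter.mp hv).2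
      have hv2' : T.degree v' = 2 := (Finset.mem_filter.mp hv').2
      have h1 := hk1 v hv2
      have h1' := hk1 v' hv2'
      have hj : k v - 1 = k v' - 1 := congrArg Prod.snd heq
      have hkk : k v = k v' := by omega
      have hc : p^[k v - 1] v = p^[k v - 1] v' := by
        have := congrArg Prod.fst heq
        simpa [← hj] using this
      set j := k v - 1 with hjdef
      have hjk : j < k v := by omega
      have hjk' : j < k v' := by omega
      have key : ∀ i ≤ j, p^[j - i] v = p^[j - i] v' := by
        intro i
        induction i with
        | zero => simpa using hc
        | succ i ih =>
          intro hij
          have hy := ih (by omega)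
          have hx : p (p^[j - (i+1)] v) = p^[j - i] v := by
            rw [show j - i = (j-(i+1))+1 from by omega, Function.iterate_succ_apply']
          have hx'0 : p (p^[j - (i+1)] v') = p^[j - i] v' := by
            rw [show j - i = (j-(i+1))+1 from by omega, Function.iterate_succ_apply']
          have hx' : p (p^[j - (i+1)] v') = p^[j - i] v := hx'0.trans hy.symm
          have hdy : T.degree (p^[j - i] v) = 2 := hkmin v _ (by omega)
          have hdx : T.degree (p^[j - (i+1)] v) = 2 := hkmin v _ (by omega)
          have hdx' : T.degree (p^[j - (i+1)] v') = 2 := by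
            have := hkmin v' (j - (i+1)) (by omega)
            exact this
          have hyr : p^[j - i] v ≠ r := fun h => by rw [h, hdegr] at hdy; omega
          have hxr : p^[j - (i+1)] v ≠ r := fun h => by rw [h, hdegr] at hdx; omega
          have hxr' : p^[j - (i+1)] v' ≠ r := fun h => by rw [h, hdegr] at hdx'; omega
          have dx : T.dist (p^[j - i] v) r + 1 = T.dist (p^[j - (i+1)] v) r := by
            rw [← hx]; exact hdist _ hxr
          have dx' : T.dist (p^[j - i] v) r + 1 = T.dist (p^[j - (i+1)] v') r := by
            rw [← hx']; exact hdist _ hxr'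
          have dpy : T.dist (p (p^[j - i] v)) r + 1 = T.dist (p^[j - i] v) r := hdist _ hyr
          have hxpy : p^[j - (i+1)] v ≠ p (p^[j - i] v) := fun h => by rw [← h] at dpy; omega
          have hxpy' : p^[j - (i+1)] v' ≠ p (p^[j - i] v) := fun h => by rw [← h] at dpy; omega
          by_contra hne
          have hsub : ({p^[j - (i+1)] v, p^[j - (i+1)] v', p (p^[j - i] v)} : Finset V)
              ⊆ T.neighborFinset (p^[j - i] v) := by
            intro z hz
            rw [SimpleGraph.mem_neighborFinset]
            simp only [Finset.mem_insert, Finset.mem_singleton] at hz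
            rcases hz with rfl | rfl | rfl
            · exact (hx ▸ hadj (p^[j - (i+1)] v)).symm
            · exact (hx' ▸ hadj (p^[j - (i+1)] v')).symm
            · exact hadj _
          have hcard3 :
              ({p^[j - (i+1)] v, p^[j - (i+1)] v', p (p^[j - i] v)} : Finset V).card = 3 := by
            rw [Finset.card_insert_of_notMem (by simp [hne, hxpy]),
              Finset.card_insert_of_notMem (by simp [hxpy']), Finset.card_singleton]
          have hle := Finset.card_le_card hsub
          rw [SimpleGraph.card_neighborFinset_eq_degree, hdy] at hle
          omega
      have := key j le_rfl
      simpa using this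
  have hDcb : D.card ≤ C.card * b := by
    rw [Finset.card_product, Finset.card_range] at hDC
    exact hDC
  -- fiberwise count of C over parents
  have hCsum : C.card = ∑ w : V, (C.filter fun c => p c = w).card :=
    Finset.card_eq_sum_card_fiberwise (fun c _ => Finset.mem_univ (p c))
  have hfibsplit : (∑ w ∈ L, (C.filter fun c => p c = w).card)
      + ((∑ w ∈ D, (C.filter fun c => p c = w).card)
        + (∑ w ∈ B, (C.filter fun c => p c = w).card))
      = ∑ w : V, (C.filter fun c => p c = w).card := by
    have h1 := Finset.sum_filter_add_sum_filter_not (univ : Finset V)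
      (fun v => T.degree v = 1) (fun w => (C.filter fun c => p c = w).card)
    have h2 := Finset.sum_filter_add_sum_filter_not (univ.filter fun v => ¬ T.degree v = 1)
      (fun v => T.degree v = 2) (fun w => (C.filter fun c => p c = w).card)
    rw [Finset.filter_filter, Finset.filter_filter, e1, ← hBdef] at h2
    rw [← hL, ← h2] at h1
    exact h1
  have hfibD : ∑ w ∈ D, (C.filter fun c => p c = w).card = 0 := by
    apply Finset.sum_eq_zero
    intro w hw
    have hw2 : T.degree w = 2 := (Finset.mem_filter.mp hw).2
    rw [Finset.card_eq_zero, Finset.eq_empty_iff_forall_notMem]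
    intro c hc
    rw [Finset.mem_filter, hCdef, Finset.mem_filter] at hc
    obtain ⟨⟨-, -, hc2⟩, hc3⟩ := hc
    rw [hc3, hw2] at hc2
    omega
  have hfibL : ∑ w ∈ L, (C.filter fun c => p c = w).card ≤ 1 := by
    calc ∑ w ∈ L, (C.filter fun c => p c = w).card
        ≤ ∑ w ∈ L, (if w = r then 1 else 0) := by
          apply Finset.sum_le_sum
          intro w hw
          have hw1 : T.degree w = 1 := (Finset.mem_filter.mp hw).2
          by_cases hwr : w = r
          · subst hwr
            simp only [if_pos rfl]
            have hsub : (C.filter fun c => p c = w) ⊆ T.neighborFinset w := by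
              intro c hc
              rw [Finset.mem_filter] at hc
              rw [SimpleGraph.mem_neighborFinset]
              exact (hc.2 ▸ hadj c).symm
            have := Finset.card_le_card hsub
            rw [SimpleGraph.card_neighborFinset_eq_degree, hw1] at this
            exact this
          · simp only [if_neg hwr]
            rw [Nat.le_zero, Finset.card_eq_zero, Finset.eq_empty_iff_forall_notMem]
            intro c hc
            rw [Finset.mem_filter, hCdef, Finset.mem_filter] at hc
            obtain ⟨⟨-, hc2, -⟩, hc3⟩ := hc
            have hcr : c ≠ r := fun h => by rw [h, hdegr] at hc2; omega
            have d1 := hdist c hcr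
            rw [hc3] at d1
            have d2 := hdist w hwr
            -- c and p w are both neighbors of w, and deg w = 1
            have hcw : c ∈ T.neighborFinset w :=
              (SimpleGraph.mem_neighborFinset _ _ _).mpr (hc3 ▸ hadj c).symm
            have hpw : p w ∈ T.neighborFinset w :=
              (SimpleGraph.mem_neighborFinset _ _ _).mpr (hadj w)
            have hcard1 : (T.neighborFinset w).card ≤ 1 := by
              rw [SimpleGraph.card_neighborFinset_eq_degree, hw1]
            have := Finset.card_le_one.mp hcard1 c hcw (p w) hpw
            rw [this] at d1
            omega
      _ = 1 := by
          rw [Finset.sum_ite_eq' L r (fun _ => 1)]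
          simp [hrL]
  have hfibB : (∑ w ∈ B, (C.filter fun c => p c = w).card) + B.card ≤ S := by
    have hbound : ∀ w ∈ B, (C.filter fun c => p c = w).card + 1 ≤ T.degree w := by
      intro w hw
      obtain ⟨-, hw1, hw2⟩ := Finset.mem_filter.mp hw
      have hwr : w ≠ r := fun h => by rw [h, hdegr] at hw1; omega
      have hsub : (C.filter fun c => p c = w) ⊆ (T.neighborFinset w).erase (p w) := by
        intro c hc
        rw [Finset.mem_filter, hCdef, Finset.mem_filter] at hc
        obtain ⟨⟨-, hc2, -⟩, hc3⟩ := hc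
        have hcr : c ≠ r := fun h => by rw [h, hdegr] at hc2; omega
        have d1 := hdist c hcr
        rw [hc3] at d1
        have d2 := hdist w hwr
        rw [Finset.mem_erase]
        refine ⟨fun h => by rw [h] at d1; omega, ?_⟩
        exact (SimpleGraph.mem_neighborFinset _ _ _).mpr (hc3 ▸ hadj c).symm
      have hle := Finset.card_le_card hsub
      have hthis : ((T.neighborFinset w).erase (p w)).card + 1 = (T.neighborFinset w).card := by
        rw [Finset.card_erase_of_mem ((SimpleGraph.mem_neighborFinset _ _ _).mpr (hadj w))]
        have : 0 < (T.neighborFinset w).card := by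
          rw [SimpleGraph.card_neighborFinset_eq_degree]; exact hdegpos w
        omega
      rw [SimpleGraph.card_neighborFinset_eq_degree] at hthis
      omega
    calc (∑ w ∈ B, (C.filter fun c => p c = w).card) + B.card
        = ∑ w ∈ B, ((C.filter fun c => p c = w).card + 1) := by
          rw [Finset.sum_add_distrib]; simp
      _ ≤ ∑ w ∈ B, T.degree w := Finset.sum_le_sum hbound
  have hCB : C.card + B.card ≤ S + 1 := by omega
  -- final arithmetic
  obtain ⟨m, hm⟩ : ∃ m, L.card = m + 1 := ⟨L.card - 1, by omega⟩
  rw [show L.card - 1 = m from by omega]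
  have hBm : B.card + 1 ≤ m := by omega
  have hCm : C.card ≤ m + B.card := by omega
  calc Fintype.card V = m + 1 + B.card + D.card := by omega
    _ ≤ m + 1 + B.card + C.card * b := by omega
    _ ≤ m + 1 + B.card + (m + B.card) * b := by
        have := Nat.mul_le_mul_right b hCm
        omega
    _ ≤ 2*m + (2*m)*b := by
        have h := Nat.mul_le_mul_right b (show m + B.card ≤ 2*m by omega)
        omega
    _ = 2*(b+1)*m := by ring
end

section
/- Let n ∈ ℕ and d, d₀ ∈ ℝ⁺ satisfy 3 ≤ d₀ ≤ d ≤ n/6. Then every (n,d)-expander is also an (n,d₀)-expander. -/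
open Finset

/-- The external neighborhood of a vertex set `X` in a graph `G`: all vertices outside `X`
with a neighbor in `X`. -/
noncomputable def extNbhd {V : Type*} [Fintype V] [DecidableEq V] (G : SimpleGraph V)
    (X : Finset V) : Finset V := by
  classical exact univ.filter fun v => v ∉ X ∧ ∃ x ∈ X, G.Adj x v

/-- `eCount G X Y` is the number of ordered pairs `(x, y) ∈ X × Y` with `{x,y} ∈ E(G)`. -/
noncomputable def eCount {V : Type*} [DecidableEq V] (G : SimpleGraph V)
    (X Y : Finset V) : ℕ := by
  classical exact ((X ×ˢ Y).filter fun p => G.Adj p.1 p.2).card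

/-- `mOf n d = ⌈n / (2d)⌉`. -/
noncomputable def mOf (n : ℕ) (d : ℝ) : ℕ := ⌈(n : ℝ) / (2 * d)⌉₊

/-- A graph `G` is an `(n,d)`-expander if it has `n` vertices,
(E1) `|N_G(X)| ≥ d|X|` for all `X` with `1 ≤ |X| < m(n,d)`, and
(E2) there is an edge between any two disjoint sets of size `m(n,d)`. -/
def IsExpander {V : Type*} [Fintype V] [DecidableEq V] (G : SimpleGraph V)
    (n : ℕ) (d : ℝ) : Prop :=
  Fintype.card V = n ∧
  (∀ X : Finset V, 1 ≤ X.card → X.card < mOf n d →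
    d * X.card ≤ ((extNbhd G X).card : ℝ)) ∧
  (∀ X Y : Finset V, Disjoint X Y → X.card = mOf n d → Y.card = mOf n d →
    0 < eCount G X Y)

lemma eCount_mono {V : Type*} [DecidableEq V] (G : SimpleGraph V) {X X' Y Y' : Finset V}
    (hX : X ⊆ X') (hY : Y ⊆ Y') : eCount G X Y ≤ eCount G X' Y' := by
  classical
  unfold eCount
  exact card_le_card (filter_subset_filter _ (product_subset_product hX hY))

lemma mOf_mono (n : ℕ) {d d₀ : ℝ} (h0 : 0 < d₀) (h1 : d₀ ≤ d) : mOf n d ≤ mOf n d₀ := by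
  apply Nat.ceil_le_ceil
  apply div_le_div_of_nonneg_left (by positivity) (by linarith) (by linarith)

/-- Monotonicity of the expander property: if `3 ≤ d₀ ≤ d ≤ n/6`, then
every `(n,d)`-expander is also an `(n,d₀)`-expander. -/
theorem stmt_2 {V : Type*} [Fintype V] [DecidableEq V] (n : ℕ) (d d₀ : ℝ)
    (h0 : 3 ≤ d₀) (h1 : d₀ ≤ d) (h2 : d ≤ (n : ℝ) / 6)
    (G : SimpleGraph V) (hG : IsExpander G n d) : IsExpander G n d₀ := by
  classical
  obtain ⟨hcard, hE1, hE2⟩ := hG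
  have hd0 : (0:ℝ) < d₀ := by linarith
  have hd : (0:ℝ) < d := by linarith
  have hn18 : (18:ℝ) ≤ n := by linarith
  have hmm : mOf n d ≤ mOf n d₀ := mOf_mono n hd0 h1
  have hmreal : ((mOf n d : ℝ)) < (n : ℝ) / (2 * d) + 1 :=
    Nat.ceil_lt_add_one (by positivity)
  have hbd : (n : ℝ) / (2 * d) ≤ (n : ℝ) / 6 := by
    apply div_le_div_of_nonneg_left (by positivity) (by norm_num) (by linarith)
  have hbd0 : (n : ℝ) / (2 * d₀) ≤ (n : ℝ) / 6 := by
    apply div_le_div_of_nonneg_left (by positivity) (by norm_num) (by linarith)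
  refine ⟨hcard, ?_, ?_⟩
  · intro X hX1 hX2
    by_cases hc : X.card < mOf n d
    · have := hE1 X hX1 hc
      have : d₀ * X.card ≤ d * X.card := by
        apply mul_le_mul_of_nonneg_right h1 (by positivity)
      linarith [hE1 X hX1 hc]
    · push_neg at hc
      -- large X case
      set S : Finset V := X ∪ extNbhd G X with hS
      set T : Finset V := univ \ S with hT
      have hTlt : T.card < mOf n d := by
        by_contra hge
        push_neg at hge
        obtain ⟨X', hX'sub, hX'card⟩ := exists_subset_card_eq hc
        obtain ⟨T', hT'sub, hT'card⟩ := exists_subset_card_eq hge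
        have hdisj : Disjoint X' T' := by
          apply Finset.disjoint_left.mpr
          intro a haX haT
          have hSa : a ∈ S := subset_union_left (hX'sub haX)
          have := hT'sub haT
          rw [hT, mem_sdiff] at this
          exact this.2 hSa
        have hpos := hE2 X' T' hdisj hX'card hT'card
        rw [eCount, card_pos] at hpos
        obtain ⟨p, hp⟩ := hpos
        rw [mem_filter, mem_product] at hp
        obtain ⟨⟨hp1, hp2⟩, hadj⟩ := hp
        have hpT : p.2 ∈ T := hT'sub hp2
        rw [hT, mem_sdiff] at hpT
        apply hpT.2
        apply subset_union_right
        simp only [extNbhd, mem_filter, mem_univ, true_and]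
        refine ⟨fun hmem => ?_, ⟨p.1, hX'sub hp1, hadj⟩⟩
        · exact hpT.2 (subset_union_left hmem)
      -- counting
      have hcover : n ≤ X.card + (extNbhd G X).card + T.card := by
        have hSle : S.card ≤ n := hcard ▸ card_le_univ S
        have h1' : T.card = n - S.card := by
          rw [hT, card_sdiff_of_subset (subset_univ S), card_univ, hcard]
        have h2' : S.card ≤ X.card + (extNbhd G X).card := card_union_le _ _
        omega
      have hXreal : (X.card : ℝ) < (n : ℝ) / (2 * d₀) := by
        rw [← Nat.lt_ceil]; exact hX2
      have hTreal : (T.card : ℝ) < (n : ℝ) / (2 * d) := by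
        rw [← Nat.lt_ceil]; exact hTlt
      have hNreal : (n : ℝ) - X.card - T.card ≤ ((extNbhd G X).card : ℝ) := by
        have := hcover
        have : (n : ℝ) ≤ (X.card : ℝ) + (extNbhd G X).card + T.card := by
          exact_mod_cast hcover
        linarith
      have hNbig : (n : ℝ) / 2 ≤ ((extNbhd G X).card : ℝ) := by
        have : (X.card : ℝ) < (n : ℝ) / 6 := lt_of_lt_of_le hXreal hbd0
        have : (T.card : ℝ) < (n : ℝ) / 6 := lt_of_lt_of_le hTreal hbd
        linarith
      have hsmall : d₀ * X.card ≤ (n : ℝ) / 2 := by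
        have := mul_lt_mul_of_pos_left hXreal hd0
        have h2d0 : d₀ * ((n : ℝ) / (2 * d₀)) = (n : ℝ) / 2 := by
          field_simp
        linarith [this, h2d0.le]
      linarith
  · intro X Y hdisj hXc hYc
    obtain ⟨X', hX'sub, hX'card⟩ := exists_subset_card_eq (hXc ▸ hmm)
    obtain ⟨Y', hY'sub, hY'card⟩ := exists_subset_card_eq (hYc ▸ hmm)
    have hdisj' : Disjoint X' Y' := hdisj.mono hX'sub hY'sub
    calc 0 < eCount G X' Y' := hE2 X' Y' hdisj' hX'card hY'card
      _ ≤ eCount G X Y := eCount_mono G hX'sub hY'sub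
end

section
/- Let m ∈ ℕ and let G be a graph such that e_G(X,Y) > 0 for all disjoint X, Y ⊆ V(G) with |X| = |Y| = m. Then for all disjoint X, Y ⊆ V(G) with |X| ≥ m and |Y| ≥ 2m, we have e_G(X,Y) ≥ |X||Y|/(4m). -/
open Finset

lemma eCount_eq_sum_left {V : Type*} [DecidableEq V] (G : SimpleGraph V)
    [DecidableRel G.Adj] (X Y : Finset V) :
    eCount G X Y = ∑ x ∈ X, (Y.filter fun y => G.Adj x y).card := by
  classical
  unfold eCount
  rw [card_filter, Finset.sum_product]
  refine Finset.sum_congr rfl fun x _ => ?_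
  rw [card_filter]
  exact Finset.sum_congr rfl fun y _ => by congr

lemma exists_min_subset {α : Type*} [DecidableEq α] (f : α → ℕ) (m : ℕ) :
    ∀ (k : ℕ) (X : Finset α), X.card = m + k →
    ∃ S ⊆ X, S.card = m ∧ X.card * ∑ x ∈ S, f x ≤ m * ∑ x ∈ X, f x
  | 0, X, h => ⟨X, subset_rfl, by omega, by rw [h]; simp⟩
  | k+1, X, h => by
    have hX : X.Nonempty := card_pos.mp (by omega)
    obtain ⟨x₀, hx₀, hmax⟩ := X.exists_max_image f hX
    obtain ⟨S, hS, hScard, hle⟩ := exists_min_subset f m k (X.erase x₀)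
      (by rw [card_erase_of_mem hx₀]; omega)
    refine ⟨S, hS.trans (erase_subset _ _), hScard, ?_⟩
    have h1 : ∑ x ∈ S, f x ≤ m * f x₀ := by
      calc ∑ x ∈ S, f x ≤ ∑ _x ∈ S, f x₀ :=
            Finset.sum_le_sum fun x hx => hmax x ((hS.trans (erase_subset _ _)) hx)
        _ = m * f x₀ := by rw [Finset.sum_const, hScard, smul_eq_mul]
    have h2 : ∑ x ∈ X.erase x₀, f x + f x₀ = ∑ x ∈ X, f x :=
      Finset.sum_erase_add X f hx₀
    have h3 : (X.erase x₀).card = m + k := by rw [card_erase_of_mem hx₀]; omega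
    rw [h3] at hle
    rw [h]
    nlinarith [hle, h1, h2]

/-- If there is an edge between any two disjoint `m`-sets of `G`, then for all
disjoint `X, Y` with `|X| ≥ m` and `|Y| ≥ 2m` one has `e_G(X,Y) ≥ |X||Y|/(4m)`. -/
theorem stmt_3 {V : Type*} [Fintype V] [DecidableEq V] (m : ℕ) (G : SimpleGraph V)
    (h : ∀ X Y : Finset V, Disjoint X Y → X.card = m → Y.card = m → 0 < eCount G X Y)
    (X Y : Finset V) (hXY : Disjoint X Y) (hX : m ≤ X.card) (hY : 2 * m ≤ Y.card) :
    ((X.card : ℝ) * Y.card) / (4 * m) ≤ (eCount G X Y : ℝ) := by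
  classical
  rcases Nat.eq_zero_or_pos m with hm | hm
  · subst hm
    simp only [Nat.cast_zero, mul_zero, div_zero]
    positivity
  -- reduce to a natural-number inequality
  suffices hnat : X.card * Y.card ≤ 4 * m * eCount G X Y by
    rw [div_le_iff₀ (by positivity)]
    calc ((X.card : ℝ) * Y.card) ≤ ((4 * m * eCount G X Y : ℕ) : ℝ) := by
          exact_mod_cast hnat
      _ = (eCount G X Y : ℝ) * (4 * m) := by push_cast; ring
  by_contra hlt
  push_neg at hlt
  -- choose m vertices of X with smallest degree into Y
  set f : V → ℕ := fun x => (Y.filter fun y => G.Adj x y).card with hf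
  obtain ⟨S, hSX, hScard, hSle⟩ := exists_min_subset f m (X.card - m) X (by omega)
  have heS : eCount G S Y = ∑ x ∈ S, f x := eCount_eq_sum_left G S Y
  rw [← eCount_eq_sum_left, ← eCount_eq_sum_left] at hSle
  -- 4 * eCount G S Y < Y.card
  have hXpos : 0 < X.card := lt_of_lt_of_le hm hX
  have h4 : 4 * eCount G S Y < Y.card := by
    have := hSle
    nlinarith [hSle, hlt, hXpos]
  -- the neighborhood of S inside Y is small
  set N : Finset V := Y.filter (fun y => ∃ s ∈ S, G.Adj s y) with hN
  have hNcard : N.card ≤ eCount G S Y := by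
    rw [heS, hf]
    calc N.card = ∑ y ∈ N, 1 := by simp
      _ ≤ ∑ y ∈ N, (S.filter fun s => G.Adj s y).card := by
          refine Finset.sum_le_sum fun y hy => ?_
          rw [hN, mem_filter] at hy
          obtain ⟨-, s, hs, hadj⟩ := hy
          exact card_pos.mpr ⟨s, mem_filter.mpr ⟨hs, hadj⟩⟩
      _ ≤ ∑ y ∈ Y, (S.filter fun s => G.Adj s y).card :=
          Finset.sum_le_sum_of_subset (filter_subset _ _)
      _ = ∑ y ∈ Y, ∑ s ∈ S, if G.Adj s y then 1 else 0 :=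
          Finset.sum_congr rfl fun y _ => card_filter _ _
      _ = ∑ s ∈ S, ∑ y ∈ Y, if G.Adj s y then 1 else 0 := Finset.sum_comm
      _ = ∑ x ∈ S, (Y.filter fun y => G.Adj x y).card :=
          Finset.sum_congr rfl fun x _ => (card_filter _ _).symm
  -- find m vertices of Y not adjacent to S
  have hTex : m ≤ (Y \ N).card := by
    have : N ⊆ Y := filter_subset _ _
    rw [card_sdiff_of_subset this]
    omega
  obtain ⟨T, hTsub, hTcard⟩ := Finset.exists_subset_card_eq hTex
  have hTY : T ⊆ Y := hTsub.trans (sdiff_subset)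
  have hdisj : Disjoint S T := hXY.mono hSX hTY
  have := h S T hdisj hScard hTcard
  -- but eCount G S T = 0
  have hzero : eCount G S T = 0 := by
    unfold eCount
    rw [card_eq_zero, filter_eq_empty_iff]
    rintro ⟨s, t⟩ hp
    rw [mem_product] at hp
    intro hadj
    have ht := hTsub hp.2
    rw [mem_sdiff, hN, mem_filter] at ht
    exact ht.2 ⟨hTY hp.2, s, hp.1, hadj⟩
  omega
end

section
/- Let G be a graph, m ∈ ℕ, and W ⊆ V(G) with |W| ≥ m². Suppose that e_G(X,Y) > 0 for all X ⊆ V(G)∖W and Y ⊆ W with |X| = |Y| = m. Then the number of vertices v ∈ V(G)∖W with |N_G(v) ∩ W| ≤ m − 1 is at most m − 1. -/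
open Finset

/-- Small Exceptional Sets: if `|W| ≥ m²` and there is an edge between any
`m`-subset of `V∖W` and any `m`-subset of `W`, then at most `m - 1` vertices of `V∖W`
have at most `m - 1` neighbors in `W`. -/
theorem stmt_4 {V : Type*} [Fintype V] [DecidableEq V] (G : SimpleGraph V)
    [DecidableRel G.Adj] (m : ℕ) (W : Finset V) (hW : m ^ 2 ≤ W.card)
    (h : ∀ X Y : Finset V, X ⊆ univ \ W → Y ⊆ W → X.card = m → Y.card = m →
      0 < eCount G X Y) :
    ((univ \ W).filter fun v => (W.filter fun w => G.Adj v w).card ≤ m - 1).card ≤ m - 1 := by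
  classical
  by_contra hc
  push_neg at hc
  set B := (univ \ W).filter fun v => (W.filter fun w => G.Adj v w).card ≤ m - 1 with hB
  rcases Nat.eq_zero_or_pos m with hm | hm
  · subst hm
    have := h ∅ ∅ (empty_subset _) (empty_subset _) rfl rfl
    simp [eCount] at this
  · have hmB : m ≤ B.card := by omega
    obtain ⟨X, hXB, hXcard⟩ := Finset.exists_subset_card_eq hmB
    have hXsub : X ⊆ univ \ W := hXB.trans (filter_subset _ _)
    set N := X.biUnion (fun v => W.filter fun w => G.Adj v w) with hN
    have hNW : N ⊆ W := by
      intro w hw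
      simp only [hN, mem_biUnion, mem_filter] at hw
      exact hw.choose_spec.2.1
    have hNcard : N.card ≤ m * (m - 1) := by
      calc N.card ≤ ∑ v ∈ X, (W.filter fun w => G.Adj v w).card := Finset.card_biUnion_le
        _ ≤ ∑ v ∈ X, (m - 1) := by
            refine Finset.sum_le_sum fun v hv => ?_
            have := hXB hv
            rw [hB, mem_filter] at this
            exact this.2
        _ = m * (m - 1) := by rw [Finset.sum_const, hXcard, smul_eq_mul]
    have hWN : m ≤ (W \ N).card := by
      rw [card_sdiff_of_subset hNW]
      obtain ⟨k, rfl⟩ : ∃ k, m = k + 1 := ⟨m - 1, (Nat.succ_pred_eq_of_pos hm).symm⟩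
      have : (k + 1) ^ 2 = (k + 1) * (k + 1 - 1) + (k + 1) := by
        simp only [Nat.add_sub_cancel]; ring
      omega
    obtain ⟨Y, hYsub, hYcard⟩ := Finset.exists_subset_card_eq hWN
    have hpos := h X Y hXsub (hYsub.trans (sdiff_subset)) hXcard hYcard
    have : eCount G X Y = 0 := by
      unfold eCount
      rw [Finset.card_eq_zero, Finset.eq_empty_iff_forall_notMem]
      rintro ⟨x, y⟩ hmem
      simp only [Finset.mem_filter, Finset.mem_product] at hmem
      obtain ⟨hxy, hadj⟩ := hmem
      have hyN : y ∈ N := by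
        simp only [hN, mem_biUnion, mem_filter]
        exact ⟨x, hxy.1, (mem_sdiff.mp (hYsub hxy.2)).1, hadj⟩
      exact (mem_sdiff.mp (hYsub hxy.2)).2 hyN
    omega
end

section
/- Let G be a graph and X ⊆ V(G)∖W be a set of size m such that every vertex of X has fewer than m neighbors in W, where |W| ≥ m². If |W ∩ N_G(X)| ≥ |W| − (m−1), then m² − m + 1 ≤ e_G(X,W) ≤ m² − m, a contradiction; hence no such set X exists. -/
open Finset

/-- the counting argument of the Small Exceptional Sets lemma. If `|W| ≥ m²`,
`X` is disjoint from `W` with `|X| = m`, every vertex of `X` has fewer than `m` neighbors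
in `W`, and `|W ∩ N_G(X)| ≥ |W| - (m-1)`, then we get the contradictory chain
`m² - m + 1 ≤ e_G(X,W) ≤ m² - m`; hence no such `X` exists. -/
theorem stmt_5 {V : Type*} [Fintype V] [DecidableEq V] (G : SimpleGraph V)
    [DecidableRel G.Adj] (m : ℕ) (hm : 1 ≤ m) (W X : Finset V)
    (hW : m ^ 2 ≤ W.card) (hd : Disjoint X W) (hX : X.card = m)
    (hdeg : ∀ x ∈ X, (W.filter fun w => G.Adj x w).card < m)
    (hN : W.card - (m - 1) ≤ (W ∩ extNbhd G X).card) : False := by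
  classical
  set S : Finset (V × V) := (X ×ˢ W).filter fun p => G.Adj p.1 p.2 with hS
  -- upper bound
  have hset : S = X.biUnion fun x => {x} ×ˢ (W.filter fun w => G.Adj x w) := by
    ext ⟨a, b⟩
    simp [hS, Finset.mem_filter, Finset.mem_product, Finset.mem_biUnion]
    tauto
  have hupper : S.card ≤ m * (m - 1) := by
    rw [hset, Finset.card_biUnion]
    · calc ∑ x ∈ X, ((({x} : Finset V) ×ˢ (W.filter fun w => G.Adj x w)).card)
          = ∑ x ∈ X, (W.filter fun w => G.Adj x w).card := by
            simp [Finset.card_product]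
        _ ≤ ∑ _x ∈ X, (m - 1) := by
            apply Finset.sum_le_sum
            intro x hx
            have := hdeg x hx
            omega
        _ = m * (m - 1) := by simp [hX]
    · intro x hx y hy hxy
      simp only [Finset.disjoint_left]
      rintro ⟨a, b⟩ hab hab'
      simp only [Finset.mem_product, Finset.mem_singleton] at hab hab'
      exact hxy (hab.1.symm.trans hab'.1)
  -- lower bound
  have hlower : (W ∩ extNbhd G X).card ≤ S.card := by
    apply Finset.card_le_card_of_surjOn Prod.snd
    intro w hw
    simp only [Finset.coe_inter, Set.mem_inter_iff, Finset.mem_coe] at hw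
    have hw2 := hw.2
    simp only [extNbhd, Finset.mem_filter, Finset.mem_univ, true_and] at hw2
    obtain ⟨x, hx, hadj⟩ := hw2.2
    exact ⟨(x, w), by simp [hS, Finset.mem_coe, Finset.mem_filter, Finset.mem_product, hx, hw.1, hadj]⟩
  have hmm : m ^ 2 = m * m := sq m
  have key : m * (m - 1) + (m - 1) < m * m := by
    cases m with
    | zero => omega
    | succ k => simp [Nat.succ_sub_one, Nat.mul_succ]
  omega
end

section
/- Let G be an (n,d)-expander, let U ⊆ V(G), and suppose that for every X ⊆ V(G) with 1 ≤ |X| < m(n,d) one has |N_G(X) ∩ U| ≥ d'|X|, where d' := |U|d/(5n) and m(n,d') ≥ m(n,d). Then for every W with U ⊆ W ⊆ V(G), the induced subgraph G[W] satisfies |N_{G[W]}(X)| ≥ d'|X| for all X ⊆ W with 1 ≤ |X| < m(|W|,d'), provided 2d'(m(|U|,d')−1) − 2m(|U|,d') ≥ d' m(|U|,d'). -/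
open Finset

lemma mem_extNbhd {V : Type*} [Fintype V] [DecidableEq V] (G : SimpleGraph V)
    (X : Finset V) (v : V) : v ∈ extNbhd G X ↔ v ∉ X ∧ ∃ x ∈ X, G.Adj x v := by
  classical
  simp [extNbhd]

/-- deterministic part of the Partition Lemma: if `G` is an `(n,d)`-expander,
`U ⊆ V(G)`, `d' = |U|d/(5n)`, `m(n,d') ≥ m(n,d)`, every small set expands into `U` with
factor `d'`, and the stated arithmetic condition holds, then for every `W ⊇ U` the induced
subgraph `G[W]` satisfies `|N_{G[W]}(X)| ≥ d'|X|` for all `X ⊆ W` with `1 ≤ |X| < m(|W|,d')`. -/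
theorem stmt_6 {V : Type*} [Fintype V] [DecidableEq V] (G : SimpleGraph V)
    (n : ℕ) (d : ℝ) (hG : IsExpander G n d) (U : Finset V) (d' : ℝ)
    (hd' : d' = (U.card : ℝ) * d / (5 * n))
    (hm : mOf n d ≤ mOf n d')
    (hU : ∀ X : Finset V, 1 ≤ X.card → X.card < mOf n d →
      d' * X.card ≤ (((extNbhd G X) ∩ U).card : ℝ))
    (harith : d' * (mOf U.card d' : ℝ) ≤
      2 * d' * ((mOf U.card d' : ℝ) - 1) - 2 * (mOf U.card d' : ℝ)) :
    ∀ W : Finset V, U ⊆ W → ∀ X ⊆ W, 1 ≤ X.card → X.card < mOf W.card d' →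
      d' * X.card ≤ (((extNbhd G X) ∩ W).card : ℝ) := by

  classical
  intro W hUW X hXW hx1 hx2
  rcases le_or_gt d' 0 with hd'0 | hd'pos
  · have : d' * X.card ≤ 0 := mul_nonpos_of_nonpos_of_nonneg hd'0 (by positivity)
    exact this.trans (by positivity)
  rcases lt_or_ge X.card (mOf n d) with hsmall | hbig
  · refine (hU X hx1 hsmall).trans ?_
    exact_mod_cast card_le_card (inter_subset_inter (Finset.Subset.refl _) hUW)
  · -- large case
    set S := W \ (X ∪ extNbhd G X) with hS
    have hB : S.card < mOf n d := by
      by_contra hc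
      push_neg at hc
      obtain ⟨B, hBS, hBcard⟩ := Finset.exists_subset_card_eq hc
      obtain ⟨X', hX'X, hX'card⟩ := Finset.exists_subset_card_eq hbig
      have hdisj : Disjoint X' B := by
        rw [Finset.disjoint_left]
        intro a haX' haB
        have := hBS haB
        rw [hS, mem_sdiff, mem_union] at this
        exact this.2 (Or.inl (hX'X haX'))
      have hpos := hG.2.2 X' B hdisj hX'card hBcard
      unfold eCount at hpos
      obtain ⟨p, hp⟩ := Finset.card_pos.mp hpos
      simp only [Finset.mem_filter, Finset.mem_product] at hp
      obtain ⟨⟨hpx, hpb⟩, hadj⟩ := hp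
      have hb := hBS hpb
      rw [hS, mem_sdiff, mem_union] at hb
      push_neg at hb
      exact hb.2.2 ((mem_extNbhd G X p.2).mpr ⟨hb.2.1, p.1, hX'X hpx, hadj⟩)
    have hcover : W ⊆ X ∪ (extNbhd G X ∩ W) ∪ S := by
      intro w hw
      simp only [hS, mem_union, mem_inter, mem_sdiff]
      tauto
    have hWle : W.card ≤ X.card + (extNbhd G X ∩ W).card + S.card :=
      (card_le_card hcover).trans ((card_union_le _ _).trans
        (add_le_add_left (card_union_le _ _) _))
    -- numeric setup
    set M := mOf U.card d' with hMdef
    set mW := mOf W.card d' with hmWdef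
    have h2d' : (0:ℝ) < 2 * d' := by linarith
    have h1 : 2 * (M:ℝ) ≤ d' * ((M:ℝ) - 2) := by nlinarith [harith]
    have hM2 : (2:ℝ) < (M:ℝ) := by
      by_contra hMle
      push_neg at hMle
      nlinarith [Nat.cast_nonneg (α := ℝ) M, mul_nonneg hd'pos.le (by linarith : (0:ℝ) ≤ 2 - (M:ℝ))]
    have hd'2 : (2:ℝ) < d' := by
      by_contra hle
      push_neg at hle
      nlinarith [mul_nonneg (by linarith : (0:ℝ) ≤ 2 - d') (by linarith : (0:ℝ) ≤ (M:ℝ) - 2)]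
    have hMmW : (M:ℝ) ≤ (mW:ℝ) := by
      have : M ≤ mW := Nat.ceil_le_ceil
        ((div_le_div_iff_of_pos_right h2d').mpr (by exact_mod_cast card_le_card hUW))
      exact_mod_cast this
    have hmWceil : (mW:ℝ) < (W.card:ℝ) / (2 * d') + 1 :=
      Nat.ceil_lt_add_one (by positivity)
    have hWgt : 2 * d' * ((mW:ℝ) - 1) < (W.card:ℝ) := by
      have := (lt_div_iff₀ h2d').mp (by linarith : (mW:ℝ) - 1 < (W.card:ℝ) / (2 * d'))
      linarith
    have hX5 : (X.card:ℝ) ≤ (mW:ℝ) - 1 := by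
      have : X.card + 1 ≤ mW := hx2
      have := (Nat.cast_le (α := ℝ)).mpr this
      push_cast at this
      linarith
    have h6 : (mOf n d : ℝ) ≤ (mW:ℝ) - 1 := by
      have : mOf n d + 1 ≤ mW := Nat.succ_le_of_lt (lt_of_le_of_lt hbig hx2)
      have := (Nat.cast_le (α := ℝ)).mpr this
      push_cast at this
      linarith
    have hSle : (S.card:ℝ) ≤ (mOf n d : ℝ) - 1 := by
      have : S.card + 1 ≤ mOf n d := hB
      have := (Nat.cast_le (α := ℝ)).mpr this
      push_cast at this
      linarith
    have hWle' : (W.card:ℝ) ≤ (X.card:ℝ) + ((extNbhd G X ∩ W).card:ℝ) + (S.card:ℝ) := by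
      exact_mod_cast hWle
    nlinarith [mul_nonneg (by linarith : (0:ℝ) ≤ d' - 2) (by linarith : (0:ℝ) ≤ (mW:ℝ) - (M:ℝ)),
      mul_nonneg hd'pos.le (by linarith : (0:ℝ) ≤ (mW:ℝ) - 1 - (X.card:ℝ))]
end

section
/- Let d, m, k ∈ ℕ and H a graph with n = k + 4Δm vertices, where Δ ≥ 2, m = m(n,d), and d ≥ 2Δ. If H is an (n,d)-expander, then (i) |N_H(X)| ≥ Δ|X| + 1 for all X ⊆ V(H) with 1 ≤ |X| ≤ m, and (ii) |N_H(X)| ≥ Δ|X| + k for all X ⊆ V(H) with m < |X| ≤ 2m. -/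
open Finset

/-- if `H` is an `(n,d)`-expander on `n = k + 4Δm` vertices with `Δ ≥ 2`,
`d ≥ 2Δ` and `m = m(n,d)`, then (i) `|N_H(X)| ≥ Δ|X| + 1` for all `X` with
`1 ≤ |X| ≤ m`, and (ii) `|N_H(X)| ≥ Δ|X| + k` for all `X` with `m < |X| ≤ 2m`. -/
theorem stmt_8 {V : Type*} [Fintype V] [DecidableEq V] (H : SimpleGraph V)
    (d m k Δ n : ℕ) (hΔ : 2 ≤ Δ) (hd : 2 * Δ ≤ d) (hn : n = k + 4 * Δ * m)
    (hm : m = mOf n (d : ℝ)) (hH : IsExpander H n (d : ℝ)) :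
    (∀ X : Finset V, 1 ≤ X.card → X.card ≤ m →
      Δ * X.card + 1 ≤ (extNbhd H X).card) ∧
    (∀ X : Finset V, m < X.card → X.card ≤ 2 * m →
      Δ * X.card + k ≤ (extNbhd H X).card) := by
  classical
  obtain ⟨hcard, hE1, hE2⟩ := hH
  -- Key lemma: for any X with m ≤ |X|, we have n < |X| + |N(X)| + m.
  have key : ∀ X : Finset V, m ≤ X.card → n < X.card + (extNbhd H X).card + m := by
    intro X hX
    by_contra h
    push_neg at h
    set N := extNbhd H X with hN
    have hScard : m ≤ (univ \ (X ∪ N)).card := by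
      have h1 : (univ \ (X ∪ N)).card = Fintype.card V - (X ∪ N).card := by
        rw [Finset.card_sdiff_of_subset (Finset.subset_univ _), Finset.card_univ]
      have h2 : (X ∪ N).card ≤ X.card + N.card := Finset.card_union_le _ _
      omega
    obtain ⟨Y, hYS, hYcard⟩ := Finset.exists_subset_card_eq hScard
    obtain ⟨X₀, hX₀X, hX₀card⟩ := Finset.exists_subset_card_eq hX
    have hdisj : Disjoint X₀ Y := by
      refine Finset.disjoint_left.mpr fun a ha haY => ?_
      have := hYS haY
      simp only [Finset.mem_sdiff, Finset.mem_union] at this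
      exact this.2 (Or.inl (hX₀X ha))
    have hpos := hE2 X₀ Y hdisj (by rw [hX₀card, hm]) (by rw [hYcard, hm])
    rw [eCount] at hpos
    obtain ⟨p, hp⟩ := Finset.card_pos.mp hpos
    simp only [Finset.mem_filter, Finset.mem_product] at hp
    obtain ⟨⟨hp1, hp2⟩, hadj⟩ := hp
    have hYmem := hYS hp2
    simp only [Finset.mem_sdiff, Finset.mem_union] at hYmem
    apply hYmem.2
    right
    rw [hN, extNbhd]
    simp only [Finset.mem_filter, Finset.mem_univ, true_and]
    exact ⟨fun hc => hYmem.2 (Or.inl hc), p.1, hX₀X hp1, hadj⟩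
  constructor
  · intro X hX1 hXm
    rcases eq_or_lt_of_le hXm with heq | hlt
    · -- |X| = m : use the key lemma
      have hk := key X heq.ge
      rw [heq] at hk ⊢
      have h4 : 4 * Δ * m = 4 * (Δ * m) := by ring
      have h2m : 2 * m ≤ Δ * m := Nat.mul_le_mul_right m hΔ
      omega
    · -- |X| < m : use E1
      have h1 := hE1 X hX1 (hm ▸ hlt)
      have h2 : ((Δ * X.card + 1 : ℕ) : ℝ) ≤ (d : ℝ) * X.card := by
        push_cast
        have hX1' : (1 : ℝ) ≤ (X.card : ℝ) := by exact_mod_cast hX1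
        have hΔ' : (2 : ℝ) ≤ (Δ : ℝ) := by exact_mod_cast hΔ
        have hd' : (2 * Δ : ℝ) ≤ (d : ℝ) := by exact_mod_cast hd
        nlinarith
      exact_mod_cast h2.trans h1
  · intro X hXm hX2m
    have hk := key X hXm.le
    have hbound : Δ * X.card ≤ 2 * (Δ * m) := by
      calc Δ * X.card ≤ Δ * (2 * m) := Nat.mul_le_mul_left Δ hX2m
        _ = 2 * (Δ * m) := by ring
    have h4 : 4 * Δ * m = 4 * (Δ * m) := by ring
    have h2m : 2 * m ≤ Δ * m := Nat.mul_le_mul_right m hΔ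
    omega
end

section
/- Let d : ℕ → ℝ⁺ with d(n) ≥ 3 for all n, and let p = p(n) = 7d(n)·log(n)/n. Then asymptotically almost surely, the random graph G(n,p) is an (n,d(n))-expander. -/
open MeasureTheory Finset ENNReal

/-- The sample space of `G(n,p)`: one Bernoulli bit per potential edge. -/
abbrev EdgeSpace (n : ℕ) := {e : Sym2 (Fin n) // ¬ e.IsDiag} → Bool

/-- The product Bernoulli measure on `EdgeSpace n` with edge probability `p`
(truncated to `[0,1]`). -/
noncomputable def gnp (n : ℕ) (p : ℝ) : Measure (EdgeSpace n) :=
  Measure.pi fun _ =>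
    (PMF.bernoulli (min (Real.toNNReal p) 1) (min_le_right _ _)).toMeasure

/-- The random graph determined by an outcome `ω : EdgeSpace n`. -/
def graphOf {n : ℕ} (ω : EdgeSpace n) : SimpleGraph (Fin n) :=
  SimpleGraph.fromRel fun x y =>
    ∃ h : ¬ (s(x, y) : Sym2 (Fin n)).IsDiag, ω ⟨s(x, y), h⟩ = true



-- every set in EdgeSpace is measurable
lemma meas_all {n : ℕ} (s : Set (EdgeSpace n)) : MeasurableSet s := by
  have h1 : ∀ ω : EdgeSpace n, MeasurableSet {ω} := by
    intro ω
    have : {ω} = ⋂ e, {ω' : EdgeSpace n | ω' e = ω e} := by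
      ext ω'; simp [funext_iff, Set.mem_iInter]
    rw [this]
    exact MeasurableSet.iInter fun e => (measurable_pi_apply e) (MeasurableSet.singleton _)
  have : s = ⋃ ω ∈ s, {ω} := by simp
  rw [this]
  exact MeasurableSet.biUnion (Set.to_countable s) fun ω _ => h1 ω

instance gnp_prob (n : ℕ) (p : ℝ) : IsProbabilityMeasure (gnp n p) := by
  unfold gnp; infer_instance

lemma gnp_all_false (n : ℕ) (p : ℝ) (S : Finset {e : Sym2 (Fin n) // ¬ e.IsDiag}) :
    gnp n p {ω | ∀ e ∈ S, ω e = false}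
      = (1 - min (ENNReal.ofReal p) 1) ^ S.card := by
  classical
  have hset : {ω : EdgeSpace n | ∀ e ∈ S, ω e = false}
      = Set.pi Set.univ (fun e => if e ∈ S then ({false} : Set Bool) else Set.univ) := by
    ext ω
    simp only [Set.mem_setOf_eq, Set.mem_pi, Set.mem_univ, forall_true_left]
    constructor
    · intro h e; by_cases he : e ∈ S <;> simp [he, h e]
    · intro h e he; have := h e; simpa [he] using this
  rw [hset, gnp, Measure.pi_pi]
  have hone : ∀ e : {e : Sym2 (Fin n) // ¬ e.IsDiag},
      (PMF.bernoulli (min (Real.toNNReal p) 1) (min_le_right _ _)).toMeasure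
        (if e ∈ S then ({false} : Set Bool) else Set.univ)
        = if e ∈ S then 1 - min (ENNReal.ofReal p) 1 else 1 := by
    intro e
    by_cases he : e ∈ S <;> simp [he, PMF.toMeasure_apply_singleton _ _ (measurableSet_singleton _), PMF.bernoulli_apply] <;> rfl
  simp only [hone]
  rw [Finset.prod_ite_mem Finset.univ S (fun _ => 1 - ENNReal.ofReal p ⊓ 1)]
  simp [Finset.prod_const]



lemma graphOf_adj {n : ℕ} (ω : EdgeSpace n) (a b : Fin n) (hab : a ≠ b) :
    (graphOf ω).Adj a b ↔ ω ⟨s(a,b), by simp [hab]⟩ = true := by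
  have hsymm : (s(b,a) : Sym2 (Fin n)) = s(a,b) := Sym2.eq_swap
  constructor
  · rintro ⟨-, ⟨h, hw⟩ | ⟨h, hw⟩⟩
    · convert hw
    · convert hw using 2
      exact Subtype.ext hsymm.symm
  · intro h
    exact ⟨hab, Or.inl ⟨by simp [hab], h⟩⟩

def pairEvent {n : ℕ} (A B : Finset (Fin n)) : Set (EdgeSpace n) :=
  {ω | ∀ a ∈ A, ∀ b ∈ B, ¬ (graphOf ω).Adj a b}

-- edges between A and B as a finset of nondiag sym2s
noncomputable def edgesBetween {n : ℕ} (A B : Finset (Fin n)) :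
    Finset {e : Sym2 (Fin n) // ¬ e.IsDiag} := by
  classical exact univ.filter fun e => e.1 ∈ (A ×ˢ B).image fun q => (s(q.1, q.2) : Sym2 (Fin n))

lemma card_edgesBetween {n : ℕ} (A B : Finset (Fin n)) (hAB : Disjoint A B) :
    (edgesBetween A B).card = A.card * B.card := by
  classical
  have hinj : Set.InjOn (fun q : Fin n × Fin n => (s(q.1, q.2) : Sym2 (Fin n)))
      ((A ×ˢ B : Finset (Fin n × Fin n)) : Set (Fin n × Fin n)) := by
    rintro ⟨a, b⟩ h1 ⟨a', b'⟩ h2 h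
    simp only [Finset.mem_coe, Finset.mem_product] at h1 h2
    simp only [Sym2.eq, Sym2.rel_iff', Prod.mk.injEq, Prod.swap_prod_mk] at h
    rcases h with ⟨rfl, rfl⟩ | ⟨rfl, rfl⟩
    · rfl
    · exact (Finset.disjoint_left.mp hAB h1.1 h2.2).elim
  have hnd : ∀ x ∈ (A ×ˢ B).image fun q => (s(q.1, q.2) : Sym2 (Fin n)), ¬ x.IsDiag := by
    intro x hx
    simp only [mem_image, mem_product] at hx
    obtain ⟨⟨a, b⟩, ⟨ha, hb⟩, rfl⟩ := hx
    simp only [Sym2.isDiag_iff_proj_eq]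
    rintro rfl
    exact Finset.disjoint_left.mp hAB ha hb
  have him : (edgesBetween A B).image Subtype.val
      = (A ×ˢ B).image fun q => (s(q.1, q.2) : Sym2 (Fin n)) := by
    ext x
    simp only [edgesBetween, mem_image, mem_filter, mem_univ, true_and]
    constructor
    · rintro ⟨e, he, rfl⟩; exact he
    · intro hx
      refine ⟨⟨x, hnd x (by simpa [mem_image] using hx)⟩, by simpa [mem_image] using hx, rfl⟩
  have := Finset.card_image_of_injective (edgesBetween A B) Subtype.val_injective
  rw [him] at this
  rw [← this, Finset.card_image_of_injOn hinj, Finset.card_product]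

lemma pairEvent_subset {n : ℕ} (A B : Finset (Fin n)) (hAB : Disjoint A B) :
    pairEvent A B ⊆ {ω | ∀ e ∈ edgesBetween A B, ω e = false} := by
  intro ω hω e he
  simp only [edgesBetween, mem_filter, mem_univ, true_and, mem_image, mem_product] at he
  obtain ⟨⟨a, b⟩, ⟨ha, hb⟩, hab⟩ := he
  have hne : a ≠ b := by rintro rfl; exact Finset.disjoint_left.mp hAB ha hb
  have hnadj := hω a ha b hb
  rw [graphOf_adj ω a b hne] at hnadj
  have : e = ⟨s(a,b), by simp [hne]⟩ := Subtype.ext hab.symm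
  rw [this]
  simpa using hnadj

/-! ### Bad events -/

noncomputable def tOf (d : ℝ) (k : ℕ) : ℕ := ⌈d * k⌉₊ - 1

noncomputable def expIdx (n : ℕ) (d : ℝ) (k : ℕ) :
    Finset (Finset (Fin n) × Finset (Fin n)) := by
  classical exact (powersetCard k univ) ×ˢ
    ((univ : Finset (Fin n)).powerset.filter fun N => N.card ≤ tOf d k)

noncomputable def pairIdx (n : ℕ) (d : ℝ) :
    Finset (Finset (Fin n) × Finset (Fin n)) := by
  classical
  exact Finset.filter
    (fun q : Finset (Fin n) × Finset (Fin n) => Disjoint q.1 q.2)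
    ((powersetCard (mOf n d) univ) ×ˢ (powersetCard (mOf n d) univ))

noncomputable def badExp (n : ℕ) (d : ℝ) : Set (EdgeSpace n) :=
  ⋃ k ∈ Finset.Icc 1 (mOf n d - 1), ⋃ q ∈ expIdx n d k,
    pairEvent q.1 (univ \ (q.1 ∪ q.2))

noncomputable def badPair (n : ℕ) (d : ℝ) : Set (EdgeSpace n) :=
  ⋃ q ∈ pairIdx n d, pairEvent q.1 q.2

lemma not_expander_subset (n : ℕ) (d : ℝ) (hd : 3 ≤ d) :
    {ω : EdgeSpace n | ¬ IsExpander (graphOf ω) n d} ⊆ badExp n d ∪ badPair n d := by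
  classical
  intro ω hω
  simp only [Set.mem_setOf_eq, IsExpander, Fintype.card_fin, true_and, not_and_or,
    not_forall] at hω
  rcases hω with hexp | hpair
  · -- expansion failure
    obtain ⟨X, h1, h2, h3⟩ := hexp
    left
    set N := extNbhd (graphOf ω) X with hN
    set k := X.card with hk
    have hNlt : (N.card : ℝ) < d * k := lt_of_not_ge h3
    have hNle : N.card ≤ tOf d k := by
      have h4 : N.card < ⌈d * k⌉₊ := Nat.lt_ceil.mpr hNlt
      have h5 : tOf d k = ⌈d * k⌉₊ - 1 := rfl
      omega
    simp only [badExp, Set.mem_iUnion, exists_prop]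
    refine ⟨k, Finset.mem_Icc.mpr ⟨h1, by omega⟩, (X, N), ?_, ?_⟩
    · simp only [expIdx, Finset.mem_product, Finset.mem_powersetCard, Finset.mem_filter,
        Finset.mem_powerset]
      exact ⟨⟨Finset.subset_univ _, by first | trivial | simp [hk]⟩, Finset.subset_univ _, hNle⟩
    · intro a ha b hb hadj
      simp only [Finset.mem_sdiff, Finset.mem_union, not_or] at hb
      exact hb.2.2 (by
        simp only [hN, extNbhd, Finset.mem_filter, Finset.mem_univ, true_and]
        exact ⟨hb.2.1, a, ha, hadj⟩)
  · -- pair failure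
    obtain ⟨X, Y, hdisj, hX, hY, hcnt⟩ := hpair
    right
    simp only [badPair, Set.mem_iUnion, exists_prop]
    refine ⟨(X, Y), ?_, ?_⟩
    · simp only [pairIdx, Finset.mem_filter, Finset.mem_product, Finset.mem_powersetCard]
      exact ⟨⟨⟨Finset.subset_univ _, hX⟩, Finset.subset_univ _, hY⟩, hdisj⟩
    · intro a ha b hb hadj
      apply hcnt
      simp only [eCount]
      rw [Finset.card_pos]
      exact ⟨(a, b), Finset.mem_filter.mpr ⟨Finset.mem_product.mpr ⟨ha, hb⟩, hadj⟩⟩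

lemma measure_pairEvent {n : ℕ} (p : ℝ) (hp0 : 0 ≤ p) (hp1 : p ≤ 1)
    (A B : Finset (Fin n)) (hAB : Disjoint A B) :
    gnp n p (pairEvent A B)
      ≤ ENNReal.ofReal (Real.exp (-(p * (A.card * B.card)))) := by
  calc gnp n p (pairEvent A B)
      ≤ gnp n p {ω | ∀ e ∈ edgesBetween A B, ω e = false} :=
        measure_mono (pairEvent_subset A B hAB)
    _ = (1 - min (ENNReal.ofReal p) 1) ^ (edgesBetween A B).card :=
        gnp_all_false n p _
    _ ≤ ENNReal.ofReal (Real.exp (-(p * (A.card * B.card)))) := by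
        rw [card_edgesBetween A B hAB]
        have hmin : min (ENNReal.ofReal p) 1 = ENNReal.ofReal p :=
          min_eq_left (by simpa using ENNReal.ofReal_le_one.mpr hp1)
        have hsub : (1 : ℝ≥0∞) - ENNReal.ofReal p = ENNReal.ofReal (1 - p) := by
          rw [ENNReal.ofReal_sub 1 hp0, ENNReal.ofReal_one]
        rw [hmin, hsub, ← ENNReal.ofReal_pow (by linarith)]
        apply ENNReal.ofReal_le_ofReal
        calc (1 - p) ^ (A.card * B.card) ≤ Real.exp (-p) ^ (A.card * B.card) := by
              apply pow_le_pow_left₀ (by linarith)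
              linarith [Real.add_one_le_exp (-p)]
          _ = Real.exp (-(p * (A.card * B.card))) := by
              rw [← Real.exp_nat_mul]; push_cast; ring_nf

lemma card_expIdx_le (n : ℕ) (hn : 1 ≤ n) (d : ℝ) (k : ℕ) :
    (expIdx n d k).card ≤ n ^ k * ((tOf d k + 1) * n ^ tOf d k) := by
  classical
  set t := tOf d k
  rw [expIdx, Finset.card_product]
  apply Nat.mul_le_mul
  · rw [Finset.card_powersetCard]
    simpa using Nat.choose_le_pow n k
  · have hsub : ((univ : Finset (Fin n)).powerset.filter fun N => N.card ≤ t)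
        ⊆ (Finset.range (t + 1)).biUnion fun j => powersetCard j univ := by
      intro N hN
      simp only [Finset.mem_filter, Finset.mem_powerset] at hN
      simp only [Finset.mem_biUnion, Finset.mem_range, Finset.mem_powersetCard]
      exact ⟨N.card, by omega, hN.1, rfl⟩
    calc ((univ : Finset (Fin n)).powerset.filter fun N => N.card ≤ t).card
        ≤ ((Finset.range (t + 1)).biUnion fun j => powersetCard j univ).card :=
          Finset.card_le_card hsub
      _ ≤ ∑ j ∈ Finset.range (t + 1), (powersetCard j (univ : Finset (Fin n))).card :=
          Finset.card_biUnion_le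
      _ ≤ ∑ j ∈ Finset.range (t + 1), n ^ t := by
          apply Finset.sum_le_sum
          intro j hj
          rw [Finset.card_powersetCard]
          calc ((univ : Finset (Fin n)).card).choose j ≤ n ^ j := by
                simpa using Nat.choose_le_pow n j
            _ ≤ n ^ t := Nat.pow_le_pow_right hn (by
                simp only [Finset.mem_range] at hj; omega)
      _ = (t + 1) * n ^ t := by simp [Finset.sum_const, Finset.card_range]

lemma card_pairIdx_le (n : ℕ) (d : ℝ) :
    (pairIdx n d).card ≤ n ^ mOf n d * n ^ mOf n d := by
  classical
  calc (pairIdx n d).card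
      ≤ ((powersetCard (mOf n d) (univ : Finset (Fin n))) ×ˢ
          (powersetCard (mOf n d) univ)).card := Finset.card_filter_le _ _
    _ = (powersetCard (mOf n d) (univ : Finset (Fin n))).card *
          (powersetCard (mOf n d) (univ : Finset (Fin n))).card := Finset.card_product _ _
    _ ≤ n ^ mOf n d * n ^ mOf n d := by
        rw [Finset.card_powersetCard]
        have : (Fintype.card (Fin n)).choose (mOf n d) ≤ n ^ mOf n d := by
          simpa using Nat.choose_le_pow n (mOf n d)
        simp only [Finset.card_univ] at *
        exact Nat.mul_le_mul this this

lemma badPair_bound (n : ℕ) (d : ℝ) (hd : 3 ≤ d) (hn : 2 ≤ n)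
    (hp1 : 7 * d * Real.log n / n ≤ 1) :
    gnp n (7 * d * Real.log n / n) (badPair n d) ≤ ENNReal.ofReal (1 / n) := by
  classical
  set L := Real.log n with hLdef
  set p := 7 * d * L / n with hpdef
  have hn0 : (0:ℝ) < n := by exact_mod_cast Nat.lt_of_lt_of_le Nat.zero_lt_two hn
  have hd0 : (0:ℝ) < d := by linarith
  have hL0 : 0 ≤ L := Real.log_nonneg (by exact_mod_cast Nat.one_le_of_lt hn)
  have hp0 : 0 ≤ p := by positivity
  set m := mOf n d with hm
  have hm_low : (n:ℝ)/(2*d) ≤ (m:ℝ) := Nat.le_ceil _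
  have hm1 : (1:ℝ) ≤ (m:ℝ) := by
    have : 1 ≤ m := Nat.ceil_pos.mpr (by positivity)
    exact_mod_cast this
  have hev : ∀ q ∈ pairIdx n d, gnp n p (pairEvent q.1 q.2)
      ≤ ENNReal.ofReal (Real.exp (-(p * ((m:ℝ) * m)))) := by
    intro q hq
    simp only [pairIdx, Finset.mem_filter, Finset.mem_product,
      Finset.mem_powersetCard] at hq
    have h := measure_pairEvent p hp0 hp1 q.1 q.2 hq.2
    rw [hq.1.1.2, hq.1.2.2] at h
    exact h
  calc gnp n p (badPair n d)
      ≤ ∑ q ∈ pairIdx n d, gnp n p (pairEvent q.1 q.2) :=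
        measure_biUnion_finset_le _ _
    _ ≤ ∑ _q ∈ pairIdx n d, ENNReal.ofReal (Real.exp (-(p * ((m:ℝ) * m)))) :=
        Finset.sum_le_sum hev
    _ = ((pairIdx n d).card : ℝ≥0∞) * ENNReal.ofReal (Real.exp (-(p * ((m:ℝ) * m)))) := by
        rw [Finset.sum_const, nsmul_eq_mul]
    _ ≤ ENNReal.ofReal ((n:ℝ)^m * (n:ℝ)^m * Real.exp (-(p * ((m:ℝ) * m)))) := by
        rw [ENNReal.ofReal_mul (by positivity)]
        apply mul_le_mul' ?_ le_rfl
        calc ((pairIdx n d).card : ℝ≥0∞) ≤ ((n ^ m * n ^ m : ℕ) : ℝ≥0∞) := by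
              exact_mod_cast card_pairIdx_le n d
          _ = ENNReal.ofReal ((n:ℝ)^m * (n:ℝ)^m) := by
              rw [← ENNReal.ofReal_natCast]; congr 1; push_cast; ring
    _ ≤ ENNReal.ofReal (1 / n) := by
        apply ENNReal.ofReal_le_ofReal
        have hexpn : (n:ℝ) = Real.exp L := (Real.exp_log hn0).symm
        have hpow : (n:ℝ)^m = Real.exp ((m:ℝ) * L) := by
          rw [hexpn, ← Real.exp_nat_mul]
        have hinv : (1:ℝ) / n = Real.exp (-L) := by
          rw [Real.exp_neg, ← hexpn]; ring
        rw [hpow, hinv, ← Real.exp_add, ← Real.exp_add]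
        apply Real.exp_le_exp.mpr
        -- need: m*L + m*L - p*(m*m) ≤ -L
        have hne : (n:ℝ) ≠ 0 := ne_of_gt hn0
        have h1 : p * ((n/(2*d)) * m) = 7/2 * L * m := by
          rw [hpdef]
          field_simp
        have h2 : p * ((n/(2*d)) * m) ≤ p * ((m:ℝ) * m) := by
          apply mul_le_mul_of_nonneg_left _ hp0
          apply mul_le_mul_of_nonneg_right hm_low (by linarith)
        nlinarith [mul_nonneg hL0 (by linarith : (0:ℝ) ≤ (m:ℝ) - 1),
          mul_nonneg (mul_nonneg hL0 (by linarith : (0:ℝ) ≤ (m:ℝ) - 1)) (by linarith : (0:ℝ) ≤ (m:ℝ))]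

set_option maxHeartbeats 1000000 in
lemma badExp_bound (n : ℕ) (d : ℝ) (hd : 3 ≤ d) (hn : 2 ≤ n)
    (hp1 : 7 * d * Real.log n / n ≤ 1) :
    gnp n (7 * d * Real.log n / n) (badExp n d) ≤ ENNReal.ofReal (1 / n) := by
  classical
  set L := Real.log n with hLdef
  set p := 7 * d * L / n with hpdef
  have hn0 : (0:ℝ) < n := by exact_mod_cast Nat.lt_of_lt_of_le Nat.zero_lt_two hn
  have hne : (n:ℝ) ≠ 0 := ne_of_gt hn0
  have hn2 : (2:ℝ) ≤ n := by exact_mod_cast hn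
  have hd0 : (0:ℝ) < d := by linarith
  have hL0 : 0 ≤ L := Real.log_nonneg (by exact_mod_cast Nat.one_le_of_lt hn)
  have hp0 : 0 ≤ p := by positivity
  set m := mOf n d with hm
  have hm_hi : (m:ℝ) < n/(2*d) + 1 := Nat.ceil_lt_add_one (by positivity)
  have hexpn : (n:ℝ) = Real.exp L := (Real.exp_log hn0).symm
  have hinv : (1:ℝ) / n = Real.exp (-L) := by rw [Real.exp_neg, ← hexpn]; ring
  have hmn : m ≤ n := by
    rw [hm, mOf]
    apply Nat.ceil_le.mpr
    apply div_le_self (le_of_lt hn0)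
    linarith
  -- per-k bound
  have hk_bound : ∀ k ∈ Finset.Icc 1 (m - 1),
      ∑ q ∈ expIdx n d k, gnp n p (pairEvent q.1 (univ \ (q.1 ∪ q.2)))
        ≤ ENNReal.ofReal (Real.exp (-(2 * (k:ℝ) * L))) := by
    intro k hk
    obtain ⟨hk1, hk2⟩ := Finset.mem_Icc.mp hk
    set t := tOf d k with htdef
    have hk1' : (1:ℝ) ≤ (k:ℝ) := by exact_mod_cast hk1
    have hm1 : 1 ≤ m := le_trans hk1 (by omega)
    have hkm : (k:ℝ) ≤ (m:ℝ) - 1 := by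
      have : k + 1 ≤ m := by omega
      have := (Nat.cast_le (α := ℝ)).mpr this
      push_cast at this; linarith
    have hkn2 : d * k < n/2 := by
      have hkr : (k:ℝ) < n/(2*d) := by linarith
      have := mul_lt_mul_of_pos_left hkr hd0
      have heq : d * ((n:ℝ)/(2*d)) = n/2 := by field_simp
      linarith
    have ht : (t:ℝ) ≤ d * k := by
      have h30 : (0:ℝ) < d * k := by positivity
      have hceil : (⌈d * (k:ℝ)⌉₊ : ℝ) < d * k + 1 := Nat.ceil_lt_add_one (le_of_lt h30)
      have hc1 : 1 ≤ ⌈d * (k:ℝ)⌉₊ := Nat.ceil_pos.mpr h30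
      have hteq : (t:ℝ) = (⌈d * (k:ℝ)⌉₊ : ℝ) - 1 := by
        rw [htdef, tOf, Nat.cast_sub hc1]; norm_num
      linarith
    have ht0 : (0:ℝ) ≤ (t:ℝ) := Nat.cast_nonneg t
    -- per-q bound
    have hq_bound : ∀ q ∈ expIdx n d k,
        gnp n p (pairEvent q.1 (univ \ (q.1 ∪ q.2)))
          ≤ ENNReal.ofReal (Real.exp (-(p * ((k:ℝ) * ((n:ℝ) - k - t))))) := by
      intro q hq
      simp only [expIdx, Finset.mem_product, Finset.mem_powersetCard, Finset.mem_filter,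
        Finset.mem_powerset] at hq
      obtain ⟨⟨hA, hAc⟩, hNs, hNc⟩ := hq
      have hdisj : Disjoint q.1 (univ \ (q.1 ∪ q.2)) := by
        rw [Finset.disjoint_left]
        intro a ha hb
        simp only [Finset.mem_sdiff, Finset.mem_union, not_or] at hb
        exact hb.2.1 ha
      refine le_trans (measure_pairEvent p hp0 hp1 q.1 _ hdisj)
        (ENNReal.ofReal_le_ofReal (Real.exp_le_exp.mpr ?_))
      have hunn : (q.1 ∪ q.2).card ≤ n := by
        calc (q.1 ∪ q.2).card ≤ (univ : Finset (Fin n)).card :=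
              Finset.card_le_card (Finset.subset_univ _)
          _ = n := by simp
      have hun : (q.1 ∪ q.2).card ≤ k + t := by
        calc (q.1 ∪ q.2).card ≤ q.1.card + q.2.card := Finset.card_union_le _ _
          _ ≤ k + t := by omega
      have hBc : ((n:ℝ) - k - t) ≤ (((univ : Finset (Fin n)) \ (q.1 ∪ q.2)).card : ℝ) := by
        have hcard : ((univ : Finset (Fin n)) \ (q.1 ∪ q.2)).card = n - (q.1 ∪ q.2).card := by
          rw [Finset.card_sdiff_of_subset (Finset.subset_univ _)]; simp
        rw [hcard, Nat.cast_sub hunn]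
        have : ((q.1 ∪ q.2).card : ℝ) ≤ (k:ℝ) + t := by exact_mod_cast hun
        linarith
      rw [hAc]
      have hkk : (0:ℝ) ≤ (k:ℝ) := by linarith
      have := mul_le_mul_of_nonneg_left hBc hkk
      have := mul_le_mul_of_nonneg_left this hp0
      linarith
    -- combine over q
    have hcardE : ((expIdx n d k).card : ℝ≥0∞)
        ≤ ENNReal.ofReal ((n:ℝ)^k * (((t:ℝ)+1) * (n:ℝ)^t)) := by
      calc ((expIdx n d k).card : ℝ≥0∞) ≤ ((n ^ k * ((t + 1) * n ^ t) : ℕ) : ℝ≥0∞) := by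
            exact_mod_cast card_expIdx_le n (by omega) d k
        _ = ENNReal.ofReal ((n:ℝ)^k * (((t:ℝ)+1) * (n:ℝ)^t)) := by
            rw [← ENNReal.ofReal_natCast]; congr 1; push_cast; ring
    calc ∑ q ∈ expIdx n d k, gnp n p (pairEvent q.1 (univ \ (q.1 ∪ q.2)))
        ≤ ∑ _q ∈ expIdx n d k,
            ENNReal.ofReal (Real.exp (-(p * ((k:ℝ) * ((n:ℝ) - k - t))))) :=
          Finset.sum_le_sum hq_bound
      _ = ((expIdx n d k).card : ℝ≥0∞)
            * ENNReal.ofReal (Real.exp (-(p * ((k:ℝ) * ((n:ℝ) - k - t))))) := by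
          rw [Finset.sum_const, nsmul_eq_mul]
      _ ≤ ENNReal.ofReal ((n:ℝ)^k * (((t:ℝ)+1) * (n:ℝ)^t)
            * Real.exp (-(p * ((k:ℝ) * ((n:ℝ) - k - t))))) := by
          rw [ENNReal.ofReal_mul (by positivity)]
          exact mul_le_mul' hcardE le_rfl
      _ ≤ ENNReal.ofReal (Real.exp (-(2 * (k:ℝ) * L))) := by
          apply ENNReal.ofReal_le_ofReal
          have hpowk : (n:ℝ)^k = Real.exp ((k:ℝ) * L) := by
            rw [hexpn, ← Real.exp_nat_mul]
          have hpowt : (n:ℝ)^t = Real.exp ((t:ℝ) * L) := by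
            rw [hexpn, ← Real.exp_nat_mul]
          have ht1 : (t:ℝ) + 1 ≤ Real.exp L := by
            rw [← hexpn]; linarith
          calc (n:ℝ)^k * (((t:ℝ)+1) * (n:ℝ)^t)
                * Real.exp (-(p * ((k:ℝ) * ((n:ℝ) - k - t))))
              ≤ Real.exp ((k:ℝ) * L) * (Real.exp L * Real.exp ((t:ℝ) * L))
                * Real.exp (-(p * ((k:ℝ) * ((n:ℝ) - k - t)))) := by
                rw [hpowk, hpowt]
                apply mul_le_mul_of_nonneg_right _ (Real.exp_nonneg _)
                apply mul_le_mul_of_nonneg_left _ (Real.exp_nonneg _)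
                exact mul_le_mul_of_nonneg_right ht1 (Real.exp_nonneg _)
            _ = Real.exp ((k:ℝ) * L + (L + (t:ℝ) * L) + -(p * ((k:ℝ) * ((n:ℝ) - k - t)))) := by
                rw [← Real.exp_add, ← Real.exp_add, ← Real.exp_add]
            _ ≤ Real.exp (-(2 * (k:ℝ) * L)) := by
                apply Real.exp_le_exp.mpr
                -- exponent inequality
                have hdk3 : 3*(k:ℝ) ≤ d*k := by nlinarith
                have hkt : (k:ℝ) + t ≤ 2/3 * n := by linarith
                have hsp : p * ((k:ℝ) * ((n:ℝ)/3)) = 7/3 * d * k * L := by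
                  rw [hpdef]; field_simp
                have hmono : p * ((k:ℝ) * ((n:ℝ)/3)) ≤ p * ((k:ℝ) * ((n:ℝ) - k - t)) := by
                  apply mul_le_mul_of_nonneg_left _ hp0
                  apply mul_le_mul_of_nonneg_left _ (by linarith)
                  linarith
                have hcoef : ((k:ℝ) + ((t:ℝ) + 1) + 2 * k) ≤ 7/3 * d * k := by linarith
                have hml := mul_le_mul_of_nonneg_right hcoef hL0
                have hexpand : ((k:ℝ) + ((t:ℝ) + 1) + 2 * k) * L
                    = (k:ℝ)*L + (L + (t:ℝ)*L) + 2*(k:ℝ)*L := by ring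
                have hsp7 : (7/3 * d * (k:ℝ)) * L = 7/3 * d * k * L := by ring
                linarith
  -- combine over k
  calc gnp n p (badExp n d)
      ≤ ∑ k ∈ Finset.Icc 1 (m - 1),
          gnp n p (⋃ q ∈ expIdx n d k, pairEvent q.1 (univ \ (q.1 ∪ q.2))) := by
        rw [badExp]; exact measure_biUnion_finset_le _ _
    _ ≤ ∑ k ∈ Finset.Icc 1 (m - 1), ENNReal.ofReal (Real.exp (-(2 * (k:ℝ) * L))) :=
        Finset.sum_le_sum fun k hk =>
          le_trans (measure_biUnion_finset_le _ _) (hk_bound k hk)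
    _ = ENNReal.ofReal (∑ k ∈ Finset.Icc 1 (m - 1), Real.exp (-(2 * (k:ℝ) * L))) :=
        (ENNReal.ofReal_sum_of_nonneg fun _ _ => Real.exp_nonneg _).symm
    _ ≤ ENNReal.ofReal (1 / n) := by
        apply ENNReal.ofReal_le_ofReal
        have hterm : ∀ k ∈ Finset.Icc 1 (m - 1),
            Real.exp (-(2 * (k:ℝ) * L)) ≤ Real.exp (-(2 * L)) := by
          intro k hk
          obtain ⟨hk1, -⟩ := Finset.mem_Icc.mp hk
          have hk1' : (1:ℝ) ≤ (k:ℝ) := by exact_mod_cast hk1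
          apply Real.exp_le_exp.mpr
          nlinarith
        calc ∑ k ∈ Finset.Icc 1 (m - 1), Real.exp (-(2 * (k:ℝ) * L))
            ≤ ∑ _k ∈ Finset.Icc 1 (m - 1), Real.exp (-(2 * L)) :=
              Finset.sum_le_sum hterm
          _ = ((m - 1 : ℕ) : ℝ) * Real.exp (-(2 * L)) := by
              rw [Finset.sum_const, nsmul_eq_mul, Nat.card_Icc]
              norm_num
          _ ≤ (n:ℝ) * Real.exp (-(2 * L)) := by
              apply mul_le_mul_of_nonneg_right _ (Real.exp_nonneg _)
              have : (m - 1 : ℕ) ≤ n := by omega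
              exact_mod_cast this
          _ ≤ 1 / n := by
              have hexp2 : Real.exp (-(2 * L)) = 1 / ((n:ℝ) * n) := by
                rw [show -(2*L) = -L + -L by ring, Real.exp_add, ← hinv]; ring
              rw [hexp2, show (n:ℝ) * (1/((n:ℝ)*n)) = 1/n by field_simp]

lemma bad_total (n : ℕ) (d : ℝ) (hd : 3 ≤ d) (hn : 2 ≤ n)
    (hp1 : 7 * d * Real.log n / n ≤ 1) :
    gnp n (7 * d * Real.log n / n) {ω : EdgeSpace n | IsExpander (graphOf ω) n d}ᶜ
      ≤ ENNReal.ofReal (2 / n) := by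
  have hn0 : (0:ℝ) < n := by exact_mod_cast Nat.lt_of_lt_of_le Nat.zero_lt_two hn
  calc gnp n (7 * d * Real.log n / n) {ω : EdgeSpace n | IsExpander (graphOf ω) n d}ᶜ
      ≤ gnp n (7 * d * Real.log n / n) (badExp n d ∪ badPair n d) := by
        apply measure_mono
        intro ω hω
        exact not_expander_subset n d hd hω
    _ ≤ gnp n (7 * d * Real.log n / n) (badExp n d)
          + gnp n (7 * d * Real.log n / n) (badPair n d) := measure_union_le _ _
    _ ≤ ENNReal.ofReal (1 / n) + ENNReal.ofReal (1 / n) :=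
        add_le_add (badExp_bound n d hd hn hp1) (badPair_bound n d hd hn hp1)
    _ = ENNReal.ofReal (2 / n) := by
        rw [← ENNReal.ofReal_add (by positivity) (by positivity)]
        congr 1
        ring


/-- if `d : ℕ → ℝ` satisfies `d(n) ≥ 3` (and the edge probability
`p(n) = 7 d(n) log n / n` is eventually a probability), then `G(n, p(n))` is
asymptotically almost surely an `(n, d(n))`-expander. -/
theorem stmt_12 (d : ℕ → ℝ) (hd : ∀ n, 3 ≤ d n)
    (hp : ∀ᶠ n in Filter.atTop, 7 * d n * Real.log n / n ≤ 1) :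
    Filter.Tendsto
      (fun n => gnp n (7 * d n * Real.log n / n)
        {ω | IsExpander (graphOf ω) n (d n)})
      Filter.atTop (nhds 1) := by
  have hbad : ∀ᶠ n in Filter.atTop,
      gnp n (7 * d n * Real.log n / n) {ω : EdgeSpace n | IsExpander (graphOf ω) n (d n)}ᶜ
        ≤ ENNReal.ofReal (2 / n) := by
    filter_upwards [hp, Filter.eventually_ge_atTop 2] with n hp1 hn2
    exact bad_total n (d n) (hd n) hn2 hp1
  have hof : Filter.Tendsto (fun n : ℕ => ENNReal.ofReal (2 / n)) Filter.atTop (nhds 0) := by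
    have h2 : Filter.Tendsto (fun n : ℕ => (2:ℝ) / n) Filter.atTop (nhds 0) :=
      tendsto_const_div_atTop_nhds_zero_nat 2
    have := (ENNReal.continuous_ofReal.tendsto 0).comp h2
    simpa [Function.comp_def] using this
  have hbad0 : Filter.Tendsto
      (fun n => gnp n (7 * d n * Real.log n / n)
        {ω : EdgeSpace n | IsExpander (graphOf ω) n (d n)}ᶜ)
      Filter.atTop (nhds 0) :=
    tendsto_of_tendsto_of_tendsto_of_le_of_le' tendsto_const_nhds hof
      (Filter.Eventually.of_forall fun n => zero_le) hbad
  have heq : ∀ n, gnp n (7 * d n * Real.log n / n)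
      {ω : EdgeSpace n | IsExpander (graphOf ω) n (d n)}
      = 1 - gnp n (7 * d n * Real.log n / n)
          {ω : EdgeSpace n | IsExpander (graphOf ω) n (d n)}ᶜ := by
    intro n
    rw [prob_compl_eq_one_sub (meas_all _)]
    rw [ENNReal.sub_sub_cancel ENNReal.one_ne_top prob_le_one]
  have : Filter.Tendsto
      (fun n => 1 - gnp n (7 * d n * Real.log n / n)
          {ω : EdgeSpace n | IsExpander (graphOf ω) n (d n)}ᶜ)
      Filter.atTop (nhds (1 - 0)) :=
    ENNReal.Tendsto.sub tendsto_const_nhds hbad0 (Or.inl ENNReal.one_ne_top)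
  rw [tsub_zero] at this
  exact this.congr fun n => (heq n).symm
end

section
/- Let G be a graph obtained from a graph H by replacing each vertex v of H with two vertices u_v, u'_v and each edge {v,w} of H by either the pair of edges {u_v,u_w}, {u'_v,u'_w} or the pair {u_v,u'_w}, {u'_v,u_w}. Then every path in G from u_v to u'_v projects to a closed walk of positive length in H; consequently, if H has girth g, then the radius of G is at least g. -/
open SimpleGraph

private lemma stmt_14_aux {V : Type*} (H : SimpleGraph V) (G : SimpleGraph (V × Bool))
    (σ : V → V → Bool) (hσ : ∀ v w, σ v w = σ w v)
    (hG : ∀ v w b c, G.Adj (v, b) (w, c) ↔ H.Adj v w ∧ c = xor (σ v w) b) :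
    ∀ (n : ℕ) (x : V) (b c : Bool), b ≠ c → ∀ (p : G.Walk (x, b) (x, c)), p.IsPath →
      p.length ≤ n → H.egirth ≤ (p.length : ℕ∞) := by
  classical
  have hf : ∀ {a b : V × Bool}, G.Adj a b → H.Adj a.1 b.1 := by
    intro a b h
    exact ((hG a.1 b.1 a.2 b.2).1 h).1
  intro n
  induction n with
  | zero =>
    intro x b c hbc p hp hl
    have := Walk.eq_of_length_eq_zero (p := p) (Nat.le_zero.mp hl)
    exact absurd (congrArg Prod.snd this) (by simpa using hbc)
  | succ n ih =>
    intro x b c hbc p hp hl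
    by_cases hB : ∃ y, y ≠ x ∧ (y, false) ∈ p.support ∧ (y, true) ∈ p.support
    · obtain ⟨y, hyx, h0, h1⟩ := hB
      have hspec := p.take_spec h0
      have hlen : (p.takeUntil (y, false) h0).length + (p.dropUntil (y, false) h0).length
          = p.length := by
        rw [← Walk.length_append, hspec]
      have h1' : (y, true) ∈
          ((p.takeUntil (y, false) h0).append (p.dropUntil (y, false) h0)).support := by
        rw [hspec]; exact h1
      rw [Walk.mem_support_append_iff] at h1'
      rcases h1' with h1' | h1'
      · set t := p.takeUntil (y, false) h0 with ht
        have htp : t.IsPath := hp.takeUntil h0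
        have hdl : 1 ≤ (p.dropUntil (y, false) h0).length := by
          by_contra hcon
          push_neg at hcon
          have := Walk.eq_of_length_eq_zero (p := p.dropUntil (y, false) h0)
            (Nat.lt_one_iff.mp hcon)
          exact hyx (congrArg Prod.fst this)
        have hdle := Walk.length_dropUntil_le t h1'
        have h2 := ih y true false (by simp) (t.dropUntil (y, true) h1') (htp.dropUntil h1')
          (by omega)
        exact h2.trans (Nat.cast_le.mpr (by omega))
      · set q := p.dropUntil (y, false) h0 with hq
        have hqp : q.IsPath := hp.dropUntil h0
        have htl1 : 1 ≤ (p.takeUntil (y, false) h0).length := by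
          by_contra hcon
          push_neg at hcon
          have := Walk.eq_of_length_eq_zero (p := p.takeUntil (y, false) h0)
            (Nat.lt_one_iff.mp hcon)
          exact hyx (congrArg Prod.fst this).symm
        have hqle := Walk.length_takeUntil_le q h1'
        have h2 := ih y false true (by simp) (q.takeUntil (y, true) h1') (hqp.takeUntil h1')
          (by omega)
        exact h2.trans (Nat.cast_le.mpr (by omega))
    · push_neg at hB
      have key : ∀ z w : V × Bool, z ∈ p.support → w ∈ p.support → z.1 = w.1 → z.2 ≠ w.2 →
          z.1 = x := by
        rintro ⟨zy, zb⟩ ⟨wy, wb⟩ hz hw h1 h2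
        by_contra hne
        simp only at h1 h2
        subst h1
        cases zb with
        | false =>
          cases wb with
          | false => exact h2 rfl
          | true => exact hB zy hne hz hw
        | true =>
          cases wb with
          | false => exact hB zy hne hw hz
          | true => exact h2 rfl
      let f : G →g H := ⟨Prod.fst, hf⟩
      have hpne : (x, b) ≠ (x, c) := fun h => hbc (congrArg Prod.snd h)
      have hplen : 0 < p.length := by
        rcases Nat.eq_zero_or_pos p.length with h | h
        · exact absurd (Walk.eq_of_length_eq_zero h) hpne
        · exact h
      let cwalk : H.Walk x x := p.map f
      have hclen : cwalk.length = p.length := Walk.length_map _ _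
      -- edges of p map injectively
      have edgeinj : ∀ (a1 b1 a2 b2 : V × Bool), G.Adj a1 b1 → G.Adj a2 b2 →
          a1 ∈ p.support → b1 ∈ p.support → a2 ∈ p.support → b2 ∈ p.support →
          a1.1 = a2.1 → b1.1 = b2.1 → s(a1, b1) = s(a2, b2) := by
        rintro ⟨ya, ba⟩ ⟨yb, bb⟩ ⟨ya', ba'⟩ ⟨yb', bb'⟩ hadj1 hadj2 hs1 hs2 hs3 hs4 he1 he2
        subst he1; subst he2
        have h1 := (hG ya yb ba bb).1 hadj1
        have h2 := (hG ya yb ba' bb').1 hadj2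
        by_cases hbb : ba = ba'
        · subst hbb
          have : bb = bb' := by rw [h1.2, h2.2]
          subst this; rfl
        · have hy : ya = x := key (ya, ba) (ya, ba') hs1 hs3 rfl hbb
          have hbbne : bb ≠ bb' := by
            rw [h1.2, h2.2]
            intro heq
            apply hbb
            revert heq
            cases (σ ya yb) <;> cases ba <;> cases ba' <;> decide
          have hz : yb = x := key (yb, bb) (yb, bb') hs2 hs4 rfl hbbne
          exact absurd (hy ▸ hz ▸ h1.1) H.irrefl
      have hcyc : cwalk.IsCycle := by
        constructor
        · constructor
          · constructor
            rw [Walk.edges_map]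
            refine List.Nodup.map_on ?_ hp.isTrail.edges_nodup
            intro e1 he1 e2 he2 hmap
            induction e1 with
            | _ a1 b1 =>
              induction e2 with
              | _ a2 b2 =>
                have hadj1 : G.Adj a1 b1 := p.adj_of_mem_edges he1
                have hadj2 : G.Adj a2 b2 := p.adj_of_mem_edges he2
                have hm1 : a1 ∈ p.support := Walk.fst_mem_support_of_mem_edges p he1
                have hm2 : b1 ∈ p.support := Walk.snd_mem_support_of_mem_edges p he1
                have hm3 : a2 ∈ p.support := Walk.fst_mem_support_of_mem_edges p he2
                have hm4 : b2 ∈ p.support := Walk.snd_mem_support_of_mem_edges p he2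
                simp only [Sym2.map_pair_eq, Sym2.eq_iff] at hmap
                rcases hmap with ⟨hh1, hh2⟩ | ⟨hh1, hh2⟩
                · exact edgeinj a1 b1 a2 b2 hadj1 hadj2 hm1 hm2 hm3 hm4 hh1 hh2
                · have := edgeinj a1 b1 b2 a2 hadj1 hadj2.symm hm1 hm2 hm4 hm3 hh1 hh2
                  rw [this, Sym2.eq_swap]
          · intro hnil
            have : cwalk.length = 0 := by rw [hnil]; rfl
            omega
        · rw [Walk.support_map, ← List.map_tail]
          refine List.Nodup.map_on ?_ hp.support_nodup.tail
          · intro z hz w hw h1'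
            have h1 : z.1 = w.1 := h1'
            by_contra hne
            have hz' : z ∈ p.support := List.mem_of_mem_tail hz
            have hw' : w ∈ p.support := List.mem_of_mem_tail hw
            have h2 : z.2 ≠ w.2 := by
              intro h2
              exact hne (Prod.ext h1 h2)
            have hzx : z.1 = x := key z w hz' hw' h1 h2
            -- then {z, w} = {(x,false),(x,true)}, one of them is (x,b) which is in the tail
            have hhead : (x, b) ∉ p.support.tail := by
              have hnodup := hp.support_nodup
              rw [p.support_eq_cons] at hnodup
              exact (List.nodup_cons.mp hnodup).1
            have hwx : w.1 = x := h1 ▸ hzx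
            apply hhead
            rcases eq_or_ne z.2 b with hzb | hzb
            · have : z = (x, b) := Prod.ext hzx hzb
              exact this ▸ hz
            · have hwb : w.2 = b := by
                revert h2 hzb
                cases z.2 <;> cases w.2 <;> cases b <;> decide
              have : w = (x, b) := Prod.ext hwx hwb
              exact this ▸ hw
      have : H.egirth ≤ (cwalk.length : ℕ∞) := by
        rw [SimpleGraph.egirth]
        exact iInf₂_le_of_le x cwalk (iInf_le _ hcyc)
      rwa [hclen] at this

/-- Let `G` be a double cover of `H`: each vertex `v` of `H` is replaced by
`(v, false)` and `(v, true)`, and each edge `{v,w}` of `H` by a perfect matching between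
the fibers, encoded by a symmetric signing `σ`. Then every path in `G` from `(v, false)`
to `(v, true)` projects to a closed walk of positive length in `H` (so its length is at
least the girth of `H`); consequently, the radius of `G` is at least the girth of `H`. -/
theorem stmt_14 {V : Type*} (H : SimpleGraph V) (G : SimpleGraph (V × Bool))
    (σ : V → V → Bool) (hσ : ∀ v w, σ v w = σ w v)
    (hG : ∀ v w b c, G.Adj (v, b) (w, c) ↔ H.Adj v w ∧ c = xor (σ v w) b) :
    (∀ (v : V) (p : G.Walk (v, false) (v, true)), p.IsPath →
      0 < p.length ∧ H.egirth ≤ (p.length : ℕ∞)) ∧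
    H.egirth ≤ ⨅ u, ⨆ w, G.edist u w := by
  classical
  have aux := stmt_14_aux H G σ hσ hG
  constructor
  · intro v p hp
    refine ⟨?_, aux p.length v false true (by simp) p hp le_rfl⟩
    rcases Nat.eq_zero_or_pos p.length with h | h
    · exact absurd (congrArg Prod.snd (Walk.eq_of_length_eq_zero h)) (by simp)
    · exact h
  · refine le_iInf fun u => ?_
    refine le_trans ?_ (le_iSup _ (u.1, !u.2))
    by_cases h : G.edist u (u.1, !u.2) = ⊤
    · rw [h]; exact le_top
    · obtain ⟨w, hw⟩ := SimpleGraph.exists_walk_of_edist_ne_top h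
      have h2 := aux w.bypass.length u.1 u.2 (!u.2) (by simp) w.bypass w.bypass_isPath le_rfl
      calc H.egirth ≤ (w.bypass.length : ℕ∞) := h2
        _ ≤ (w.length : ℕ∞) := Nat.cast_le.mpr (Walk.length_bypass_le w)
        _ = G.edist u (u.1, !u.2) := hw
end

section
/- Let a, b ∈ ℕ and let (X, ℱ) be a finite hypergraph. If ∑_{F∈ℱ} (1+b)^{−|F|/a} < 1/(1+b), then the (a:b) Maker-Breaker game on (X,ℱ) is Breaker's win. -/
open Finset

/-- `BreakerWinsFrom a b Fam fuel M free` : with Maker to move, Maker having already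
claimed `M` and the elements of `free` unclaimed, Breaker can ensure (within `fuel`
further rounds, enough when `fuel ≥ |free|` and `a ≥ 1`) that at the end of the game
Maker has not claimed all elements of any `F ∈ Fam`. In each round Maker first claims
`min a |free|` free elements, then Breaker claims `min b` of the remaining free elements. -/
def BreakerWinsFrom {α : Type*} [DecidableEq α] (a b : ℕ) (Fam : Finset (Finset α)) :
    ℕ → Finset α → Finset α → Prop
  | 0, M, _ => ∀ F ∈ Fam, ¬ F ⊆ M
  | fuel + 1, M, free =>
    if free = ∅ then ∀ F ∈ Fam, ¬ F ⊆ M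
    else ∀ A ⊆ free, A.card = min a free.card →
      ∃ C ⊆ free \ A, C.card = min b (free \ A).card ∧
        BreakerWinsFrom a b Fam fuel (M ∪ A) ((free \ A) \ C)

/-- The `(a : b)` Maker-Breaker game on the hypergraph `(α, Fam)` is Breaker's win. -/
def BreakerWins {α : Type*} [Fintype α] [DecidableEq α] (a b : ℕ)
    (Fam : Finset (Finset α)) : Prop :=
  BreakerWinsFrom a b Fam (Fintype.card α) ∅ univ

namespace Beck

variable {α : Type*} [DecidableEq α]

noncomputable def wt (a b : ℕ) (M F : Finset α) : ℝ :=
  ((1 : ℝ) + b) ^ (-(((F \ M).card : ℝ)) / a)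

noncomputable def pot (a b : ℕ) (Fam : Finset (Finset α)) (M free : Finset α) : ℝ :=
  ∑ F ∈ Fam.filter (fun F => F ⊆ M ∪ free), wt a b M F

noncomputable def dang (a b : ℕ) (Fam : Finset (Finset α)) (M free : Finset α) (x : α) : ℝ :=
  ∑ F ∈ Fam.filter (fun F => F ⊆ M ∪ free ∧ x ∈ F), wt a b M F

lemma one_add_pos (b : ℕ) : (0:ℝ) < 1 + b := by positivity

lemma wt_pos (a b : ℕ) (M F : Finset α) : 0 < wt a b M F :=
  Real.rpow_pos_of_pos (one_add_pos b) _

lemma pot_nonneg (a b : ℕ) (Fam : Finset (Finset α)) (M free : Finset α) :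
    0 ≤ pot a b Fam M free :=
  sum_nonneg fun F _ => (wt_pos a b M F).le

lemma dang_nonneg (a b : ℕ) (Fam : Finset (Finset α)) (M free : Finset α) (x : α) :
    0 ≤ dang a b Fam M free x :=
  sum_nonneg fun F _ => (wt_pos a b M F).le

lemma pot_mono (a b : ℕ) (Fam : Finset (Finset α)) (M : Finset α) {s t : Finset α}
    (hst : s ⊆ t) : pot a b Fam M s ≤ pot a b Fam M t := by
  apply sum_le_sum_of_subset_of_nonneg
  · intro F hF
    simp only [mem_filter] at *
    exact ⟨hF.1, hF.2.trans (union_subset_union_right hst)⟩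
  · intro F _ _; exact (wt_pos a b M F).le

lemma dang_mono (a b : ℕ) (Fam : Finset (Finset α)) (M : Finset α) {s t : Finset α}
    (hst : s ⊆ t) (x : α) : dang a b Fam M s x ≤ dang a b Fam M t x := by
  apply sum_le_sum_of_subset_of_nonneg
  · intro F hF
    simp only [mem_filter] at *
    exact ⟨hF.1, hF.2.1.trans (union_subset_union_right hst), hF.2.2⟩
  · intro F _ _; exact (wt_pos a b M F).le

lemma dang_le_pot (a b : ℕ) (Fam : Finset (Finset α)) (M free : Finset α) (x : α) :
    dang a b Fam M free x ≤ pot a b Fam M free := by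
  apply sum_le_sum_of_subset_of_nonneg
  · intro F hF
    simp only [mem_filter] at *
    exact ⟨hF.1, hF.2.1⟩
  · intro F _ _; exact (wt_pos a b M F).le

lemma one_le_pot (a b : ℕ) (Fam : Finset (Finset α)) {M F : Finset α} (free : Finset α)
    (hF : F ∈ Fam) (hFM : F ⊆ M) : 1 ≤ pot a b Fam M free := by
  have hmem : F ∈ Fam.filter (fun F => F ⊆ M ∪ free) :=
    mem_filter.2 ⟨hF, hFM.trans subset_union_left⟩
  have hwt : wt a b M F = 1 := by
    rw [wt, sdiff_eq_empty_iff_subset.2 hFM]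
    simp
  calc (1:ℝ) = wt a b M F := hwt.symm
    _ ≤ pot a b Fam M free := single_le_sum (fun F _ => (wt_pos a b M F).le) hmem

lemma pot_erase (a b : ℕ) (Fam : Finset (Finset α)) {M g : Finset α} {x : α}
    (hx : x ∈ g) (hxM : x ∉ M) :
    pot a b Fam M (g.erase x) = pot a b Fam M g - dang a b Fam M g x := by
  have hfil : Fam.filter (fun F => F ⊆ M ∪ g.erase x)
      = (Fam.filter (fun F => F ⊆ M ∪ g)).filter (fun F => x ∉ F) := by
    rw [filter_filter]
    apply filter_congr
    intro F _
    constructor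
    · intro h
      refine ⟨h.trans (union_subset_union_right (erase_subset x g)), fun hxF => ?_⟩
      rcases mem_union.1 (h hxF) with h1 | h1
      · exact hxM h1
      · exact (notMem_erase x g) h1
    · rintro ⟨h1, h2⟩ y hy
      rcases mem_union.1 (h1 hy) with h3 | h3
      · exact mem_union_left _ h3
      · exact mem_union_right _ (mem_erase.2 ⟨fun hyx => h2 (hyx ▸ hy), h3⟩)
  have hd : dang a b Fam M g x
      = ∑ F ∈ (Fam.filter (fun F => F ⊆ M ∪ g)).filter (fun F => x ∈ F), wt a b M F := by
    rw [dang, filter_filter]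
  rw [pot, hfil, hd, pot, eq_sub_iff_add_eq, add_comm]
  exact sum_filter_add_sum_filter_not _ _ _

/-- convexity: `(1+b)^(k/a) ≤ 1 + k*b/a` for `k ≤ a`. -/
lemma rpow_ratio_le (b : ℕ) {a k : ℕ} (ha : 1 ≤ a) (hk : k ≤ a) :
    ((1:ℝ) + b) ^ ((k:ℝ) / a) ≤ 1 + k * b / a := by
  have ha' : (0:ℝ) < a := by exact_mod_cast ha
  set μ : ℝ := (k:ℝ)/a with hμdef
  have hμ0 : 0 ≤ μ := by positivity
  have hμ1 : μ ≤ 1 := by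
    rw [hμdef, div_le_one ha']; exact_mod_cast hk
  have hpos := one_add_pos b
  have h1μ : (0:ℝ) ≤ 1 - μ := by linarith
  have hsum : μ + (1 - μ) = 1 := by ring
  have h2 := convexOn_exp.2 (Set.mem_univ (Real.log (1+(b:ℝ)))) (Set.mem_univ (0:ℝ))
      hμ0 h1μ hsum
  simp only [smul_eq_mul, mul_zero, add_zero, Real.exp_zero, Real.exp_log hpos, mul_one] at h2
  have h1 : ((1:ℝ)+b) ^ μ = Real.exp (μ * Real.log (1+(b:ℝ))) := by
    rw [Real.rpow_def_of_pos hpos, mul_comm]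
  rw [h1]
  have heq : μ * (1+(b:ℝ)) + (1-μ) = 1 + (k:ℝ) * b / a := by
    rw [hμdef]; field_simp; ring
  linarith [h2]

lemma maker_step (a b : ℕ) (ha : 1 ≤ a) (hb : 1 ≤ b) (Fam : Finset (Finset α))
    {M free A : Finset α} (hMf : Disjoint M free) (hA : A ⊆ free)
    (hAcard : A.card ≤ a) (hAne : A.Nonempty)
    (hpot : pot a b Fam M free < 1)
    (hdang : ∀ x ∈ free, pot a b Fam M free + b * dang a b Fam M free x < 1) :
    pot a b Fam (M ∪ A) (free \ A) < 1 := by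
  have ha' : (0:ℝ) < a := by exact_mod_cast ha
  have hb' : (0:ℝ) < b := by exact_mod_cast hb
  have hpos := one_add_pos b
  have hMA : Disjoint M A := hMf.mono_right hA
  have hunion : (M ∪ A) ∪ (free \ A) = M ∪ free := by
    rw [union_assoc, union_sdiff_of_subset hA]
  set S := Fam.filter (fun F => F ⊆ M ∪ free) with hS
  have hP' : pot a b Fam (M ∪ A) (free \ A) = ∑ F ∈ S, wt a b (M ∪ A) F := by
    rw [pot, hunion]
  -- per-set: wt (M∪A) F = wt M F * (1+b)^(k_F/a) where k_F = ((F\M)∩A).card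
  have hwt : ∀ F : Finset α,
      wt a b (M ∪ A) F = wt a b M F * ((1:ℝ)+b) ^ ((((F \ M) ∩ A).card : ℝ) / a) := by
    intro F
    have hset : F \ (M ∪ A) = (F \ M) \ A := by
      ext y; simp [mem_sdiff, mem_union]; tauto
    have hcard : ((F \ M) \ A).card = (F \ M).card - ((F \ M) ∩ A).card := by
      have := card_sdiff_add_card_inter (F \ M) A
      omega
    have hle : ((F \ M) ∩ A).card ≤ (F \ M).card := card_le_card inter_subset_left
    have hcast : ((F \ (M ∪ A)).card : ℝ) = ((F \ M).card : ℝ) - ((F \ M) ∩ A).card := by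
      rw [hset, hcard]
      push_cast [hle]
      ring
    rw [wt, wt, hcast, ← Real.rpow_add hpos]
    congr 1
    ring
  have hkA : ∀ F : Finset α, ((F \ M) ∩ A).card ≤ A.card := fun F =>
    card_le_card inter_subset_right
  have hbound : ∀ F ∈ S, wt a b (M ∪ A) F
      ≤ wt a b M F * (1 + (((F \ M) ∩ A).card : ℝ) * b / a) := by
    intro F _
    rw [hwt F]
    exact mul_le_mul_of_nonneg_left
      (rpow_ratio_le b ha ((hkA F).trans hAcard)) (wt_pos a b M F).le
  -- double counting
  have hdc : ∑ F ∈ S, wt a b M F * ((((F \ M) ∩ A).card : ℝ))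
      = ∑ y ∈ A, dang a b Fam M free y := by
    have hcard : ∀ F : Finset α, ((((F \ M) ∩ A).card : ℝ))
        = ∑ y ∈ A, (if y ∈ F \ M then (1:ℝ) else 0) := by
      intro F
      rw [inter_comm, ← Finset.filter_mem_eq_inter]
      rw [card_filter]
      push_cast
      rfl
    calc ∑ F ∈ S, wt a b M F * ((((F \ M) ∩ A).card : ℝ))
        = ∑ F ∈ S, ∑ y ∈ A, (if y ∈ F \ M then wt a b M F else 0) := by
          apply sum_congr rfl; intro F _
          rw [hcard F, mul_sum]
          apply sum_congr rfl; intro y _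
          by_cases hy : y ∈ F \ M <;> simp [hy]
      _ = ∑ y ∈ A, ∑ F ∈ S, (if y ∈ F \ M then wt a b M F else 0) := sum_comm
      _ = ∑ y ∈ A, dang a b Fam M free y := by
          apply sum_congr rfl; intro y hyA
          have hyM : y ∉ M := disjoint_right.1 hMf (hA hyA)
          rw [dang, ← filter_filter, sum_filter, sum_filter, sum_filter]
          apply sum_congr rfl
          intro F _
          by_cases h1 : F ⊆ M ∪ free <;> by_cases h2 : y ∈ F <;>
            simp [h1, h2, mem_sdiff, hyM]
  -- bound on sum of dang
  have hdsum : ∑ y ∈ A, dang a b Fam M free y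
      < (A.card : ℝ) * ((1 - pot a b Fam M free) / b) := by
    have : ∀ y ∈ A, dang a b Fam M free y < (1 - pot a b Fam M free) / b := by
      intro y hy
      have := hdang y (hA hy)
      rw [lt_div_iff₀ hb']
      linarith
    calc ∑ y ∈ A, dang a b Fam M free y
        < ∑ _y ∈ A, (1 - pot a b Fam M free) / b := sum_lt_sum_of_nonempty hAne this
      _ = (A.card : ℝ) * ((1 - pot a b Fam M free) / b) := by
          rw [sum_const, nsmul_eq_mul]
  have hchain : pot a b Fam (M ∪ A) (free \ A)
      ≤ pot a b Fam M free + (b / a) * ∑ y ∈ A, dang a b Fam M free y := by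
    rw [hP']
    calc ∑ F ∈ S, wt a b (M ∪ A) F
        ≤ ∑ F ∈ S, wt a b M F * (1 + (((F \ M) ∩ A).card : ℝ) * b / a) :=
          sum_le_sum hbound
      _ = ∑ F ∈ S, wt a b M F + (b / a) * ∑ F ∈ S, wt a b M F * ((((F \ M) ∩ A).card : ℝ)) := by
          rw [mul_sum, ← sum_add_distrib]
          apply sum_congr rfl; intro F _; ring
      _ = pot a b Fam M free + (b / a) * ∑ y ∈ A, dang a b Fam M free y := by
          rw [hdc, pot, hS]
  have hAle : (A.card : ℝ) ≤ a := by exact_mod_cast hAcard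
  have hA0 : (0:ℝ) < A.card := by exact_mod_cast card_pos.2 hAne
  have h1P : 0 < 1 - pot a b Fam M free := by linarith
  have hba : 0 < (b:ℝ)/a := by positivity
  calc pot a b Fam (M ∪ A) (free \ A)
      ≤ pot a b Fam M free + (b / a) * ∑ y ∈ A, dang a b Fam M free y := hchain
    _ < pot a b Fam M free + (b / a) * ((A.card : ℝ) * ((1 - pot a b Fam M free) / b)) := by
        have := mul_lt_mul_of_pos_left hdsum hba
        linarith
    _ = pot a b Fam M free + (A.card : ℝ) / a * (1 - pot a b Fam M free) := by
        field_simp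
    _ ≤ pot a b Fam M free + 1 * (1 - pot a b Fam M free) := by
        apply add_le_add (le_refl _)
        apply mul_le_mul_of_nonneg_right _ h1P.le
        rw [div_le_one ha']
        exact hAle
    _ = 1 := by ring

lemma greedy (a b : ℕ) (Fam : Finset (Finset α)) :
    ∀ (m : ℕ) (M g : Finset α), Disjoint M g →
    ∃ C ⊆ g, C.card = min m g.card ∧
      ∀ x ∈ g \ C, pot a b Fam M (g \ C) + (m:ℝ) * dang a b Fam M (g \ C) x
        ≤ pot a b Fam M g := by
  intro m
  induction m with
  | zero =>
    intro M g _
    refine ⟨∅, empty_subset g, by simp, ?_⟩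
    intro x hx
    simp [sdiff_empty]
  | succ m ih =>
    intro M g hMg
    rcases eq_empty_or_nonempty g with rfl | hg
    · exact ⟨∅, by simp, by simp, by simp⟩
    · obtain ⟨x₀, hx₀g, hx₀max⟩ := exists_max_image g (dang a b Fam M g) hg
      obtain ⟨C₁, hC₁sub, hC₁card, hC₁⟩ := ih M (g.erase x₀) (hMg.mono_right (erase_subset x₀ g))
      have hx₀C₁ : x₀ ∉ C₁ := fun hc => notMem_erase x₀ g (hC₁sub hc)
      have hx₀M : x₀ ∉ M := disjoint_right.1 hMg hx₀g
      refine ⟨insert x₀ C₁, insert_subset hx₀g (hC₁sub.trans (erase_subset _ _)), ?_, ?_⟩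
      · rw [card_insert_of_notMem hx₀C₁, hC₁card, card_erase_of_mem hx₀g]
        have := card_pos.2 hg
        omega
      · have hset : g \ insert x₀ C₁ = (g.erase x₀) \ C₁ := by
          ext y
          simp only [mem_sdiff, mem_erase, mem_insert]
          tauto
        intro x hx
        rw [hset] at hx ⊢
        have h1 := hC₁ x hx
        have hxg : x ∈ g := (erase_subset _ _) ((mem_sdiff.1 hx).1)
        have h2 : dang a b Fam M ((g.erase x₀) \ C₁) x ≤ dang a b Fam M g x :=
          dang_mono a b Fam M (sdiff_subset.trans (erase_subset _ _)) x
        have h3 : dang a b Fam M g x ≤ dang a b Fam M g x₀ := hx₀max x hxg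
        have h4 : pot a b Fam M (g.erase x₀) = pot a b Fam M g - dang a b Fam M g x₀ :=
          pot_erase a b Fam hx₀g hx₀M
        push_cast
        rw [h4] at h1
        linarith

lemma main (a b : ℕ) (ha : 1 ≤ a) (hb : 1 ≤ b) (Fam : Finset (Finset α)) :
    ∀ (fuel : ℕ) (M free : Finset α), Disjoint M free →
      pot a b Fam M free < 1 →
      (∀ x ∈ free, pot a b Fam M free + b * dang a b Fam M free x < 1) →
      BreakerWinsFrom a b Fam fuel M free := by
  intro fuel
  induction fuel with
  | zero =>
    intro M free _ hpot _
    simp only [BreakerWinsFrom]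
    intro F hF hFM
    exact absurd (one_le_pot a b Fam free hF hFM) (not_le.2 hpot)
  | succ fuel ih =>
    intro M free hMf hpot hdang
    simp only [BreakerWinsFrom]
    split_ifs with hfe
    · intro F hF hFM
      exact absurd (one_le_pot a b Fam free hF hFM) (not_le.2 hpot)
    · intro A hA hAcard
      have hfree : free.Nonempty := nonempty_iff_ne_empty.2 hfe
      have hAne : A.Nonempty := by
        rw [← card_pos, hAcard]
        have := card_pos.2 hfree
        omega
      have hAle : A.card ≤ a := by rw [hAcard]; exact min_le_left _ _
      have hpot' : pot a b Fam (M ∪ A) (free \ A) < 1 :=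
        maker_step a b ha hb Fam hMf hA hAle hAne hpot hdang
      have hd' : Disjoint (M ∪ A) (free \ A) := by
        rw [disjoint_union_left]
        exact ⟨hMf.mono_right sdiff_subset, disjoint_sdiff_self_right⟩
      obtain ⟨C, hCsub, hCcard, hC⟩ := greedy a b Fam b (M ∪ A) (free \ A) hd'
      refine ⟨C, hCsub, hCcard, ?_⟩
      apply ih
      · exact hd'.mono_right sdiff_subset
      · exact lt_of_le_of_lt (pot_mono a b Fam (M ∪ A) sdiff_subset) hpot'
      · intro x hx
        exact lt_of_le_of_lt (hC x hx) hpot'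

end Beck

/-- Beck's generalization of the Erdős–Selfridge criterion: if
`∑_{F ∈ ℱ} (1+b)^{-|F|/a} < 1/(1+b)`, then the `(a : b)` Maker-Breaker game on
`(X, ℱ)` is Breaker's win. -/
theorem stmt_17 {α : Type*} [Fintype α] [DecidableEq α] (a b : ℕ)
    (ha : 1 ≤ a) (hb : 1 ≤ b) (Fam : Finset (Finset α))
    (h : ∑ F ∈ Fam, ((1 : ℝ) + b) ^ (-(F.card : ℝ) / a) < 1 / (1 + b)) :
    BreakerWins a b Fam := by
  have hpos := Beck.one_add_pos b
  have hP : Beck.pot a b Fam ∅ univ = ∑ F ∈ Fam, ((1 : ℝ) + b) ^ (-(F.card : ℝ) / a) := by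
    rw [Beck.pot, filter_true_of_mem (fun F _ => by simp : ∀ F ∈ Fam, F ⊆ ∅ ∪ univ)]
    apply sum_congr rfl
    intro F _
    rw [Beck.wt, sdiff_empty]
  have hP1 : (1 + (b:ℝ)) * Beck.pot a b Fam ∅ univ < 1 := by
    rw [hP]
    calc (1 + (b:ℝ)) * ∑ F ∈ Fam, ((1 : ℝ) + b) ^ (-(F.card : ℝ) / a)
        < (1 + (b:ℝ)) * (1 / (1 + b)) := by
          exact mul_lt_mul_of_pos_left h hpos
      _ = 1 := by field_simp
  have hP0 := Beck.pot_nonneg a b Fam (∅ : Finset α) univ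
  have hb0 : (0:ℝ) ≤ b := by positivity
  rw [BreakerWins]
  apply Beck.main a b ha hb Fam
  · exact disjoint_empty_left _
  · nlinarith
  · intro x _
    have hd := Beck.dang_le_pot a b Fam (∅ : Finset α) univ x
    nlinarith
end
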